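/- arXiv:2301.02269 — 4 statements merged into one kernel-verified Lean document; each statement's English description precedes it below -/
import Mathlib

section
/- For every Ψ ∈ ℂ² ⊗ S(ℝ) and every t ∈ ℝ, ‖S₂₁(t)Ψ‖ ≤ (|λ|/|ω|)·|sin(tω)|·‖(N+1)^{1/2}Ψ‖, where S₂₁(t) = -(λ sin(tω)/ω)(e^{itω} σ₊ ⊗ a† + e^{-itω} σ₋ ⊗ a) and N = I ⊗ a†a. -/
open scoped InnerProductSpace

noncomputable section

/-- The subspace of vectors with rapidly decreasing coefficients with respect to the
orthonormal basis `Φ (j, n) = e_j ⊗ φ_n` of `ℂ² ⊗ L²(ℝ)`; this is the image of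
`ℂ² ⊗ S(ℝ)`. -/
def RapidDecay {H : Type*} [NormedAddCommGroup H] [InnerProductSpace ℂ H]
    (Φ : Fin 2 × ℕ → H) : Set H :=
  {Ψ | ∀ k : ℕ, ∃ C : ℝ, ∀ j : Fin 2, ∀ n : ℕ, ‖⟪Φ (j, n), Ψ⟫_ℂ‖ * (n : ℝ) ^ k ≤ C}

lemma hasSum_coeff_sq {H : Type*} [NormedAddCommGroup H] [InnerProductSpace ℂ H]
    [CompleteSpace H] {ι : Type*} (Φ : HilbertBasis ι ℂ H) (x : H) :
    HasSum (fun i => ‖⟪Φ i, x⟫_ℂ‖ ^ 2) (‖x‖ ^ 2) := by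
  have h := (Φ.hasSum_inner_mul_inner x x).mapL Complex.reCLM
  simp only [Complex.reCLM_apply] at h
  convert h using 2 with i
  · rw [← inner_conj_symm x (Φ i)]
    set z := ⟪Φ i, x⟫_ℂ
    simp only [Complex.mul_re, Complex.conj_re, Complex.conj_im,
      Complex.sq_norm, Complex.normSq_apply]
    ring
  · exact (inner_self_eq_norm_sq (𝕜 := ℂ) x).symm

def eIdx : Fin 2 × ℕ → Fin 2 × ℕ := fun p =>
  if p.1 = 0 then (if p.2 = 0 then (0, 0) else (1, p.2 - 1)) else (0, p.2 + 1)

lemma eIdx_inj : Function.Injective eIdx := by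
  rintro ⟨j₁, n₁⟩ ⟨j₂, n₂⟩ h
  fin_cases j₁ <;> fin_cases j₂ <;> rcases n₁ with _ | n₁ <;> rcases n₂ with _ | n₂ <;>
    simp [eIdx, Prod.ext_iff] at h ⊢ <;> omega

lemma eIdx_zero_succ (n : ℕ) : eIdx (0, n + 1) = (1, n) := by simp [eIdx]
lemma eIdx_one (n : ℕ) : eIdx (1, n) = (0, n + 1) := by simp [eIdx]

/-- For every `Ψ ∈ ℂ² ⊗ S(ℝ)` and every `t ∈ ℝ`,
`‖S₂₁(t)Ψ‖ ≤ (|λ|/|ω|)·|sin(tω)|·‖(N+1)^{1/2}Ψ‖`, where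
`S₂₁(t) = -(λ sin(tω)/ω)(e^{itω} σ₊ ⊗ a† + e^{-itω} σ₋ ⊗ a)` and `N = I ⊗ a†a`.
The operators are specified by their matrix elements in the basis `Φ (j, n) = e_j ⊗ φ_n`. -/
theorem norm_S21_le {H : Type*} [NormedAddCommGroup H] [InnerProductSpace ℂ H]
    [CompleteSpace H]
    (Φ : HilbertBasis (Fin 2 × ℕ) ℂ H)
    (lam ω : ℝ) (hω : ω ≠ 0)
    (S21 : ℝ → H →ₗ[ℂ] H) (sqrtN1 : H →ₗ[ℂ] H)
    (hS0 : ∀ Ψ ∈ RapidDecay ⇑Φ, ∀ t : ℝ, ∀ n : ℕ,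
      ⟪Φ (0, n), S21 t Ψ⟫_ℂ
        = -((lam * Real.sin (t * ω) / ω : ℝ) : ℂ) * Complex.exp (Complex.I * t * ω)
            * (Real.sqrt n : ℂ) * ⟪Φ (1, n - 1), Ψ⟫_ℂ)
    (hS1 : ∀ Ψ ∈ RapidDecay ⇑Φ, ∀ t : ℝ, ∀ n : ℕ,
      ⟪Φ (1, n), S21 t Ψ⟫_ℂ
        = -((lam * Real.sin (t * ω) / ω : ℝ) : ℂ) * Complex.exp (-(Complex.I * t * ω))
            * (Real.sqrt (n + 1) : ℂ) * ⟪Φ (0, n + 1), Ψ⟫_ℂ)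
    (hN : ∀ Ψ ∈ RapidDecay ⇑Φ, ∀ j : Fin 2, ∀ n : ℕ,
      ⟪Φ (j, n), sqrtN1 Ψ⟫_ℂ = (Real.sqrt (n + 1) : ℂ) * ⟪Φ (j, n), Ψ⟫_ℂ)
    (Ψ : H) (hΨ : Ψ ∈ RapidDecay ⇑Φ) (t : ℝ) :
    ‖S21 t Ψ‖ ≤ |lam| / |ω| * |Real.sin (t * ω)| * ‖sqrtN1 Ψ‖ := by
  set r : ℝ := lam * Real.sin (t * ω) / ω with hr
  have hc : |r| = |lam| / |ω| * |Real.sin (t * ω)| := by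
    rw [hr, abs_div, abs_mul]; ring
  -- norm of the exponentials
  have hexp1 : ‖Complex.exp (Complex.I * t * ω)‖ = 1 := by
    rw [Complex.norm_exp]
    simp [Complex.mul_re]
  have hexp2 : ‖Complex.exp (-(Complex.I * t * ω))‖ = 1 := by
    rw [Complex.norm_exp]
    simp [Complex.mul_re]
  have hS := hasSum_coeff_sq Φ (S21 t Ψ)
  have hNh := (hasSum_coeff_sq Φ (sqrtN1 Ψ)).mul_left (|r| ^ 2)
  -- termwise bound
  have hbound : ∀ p : Fin 2 × ℕ,
      ‖⟪Φ p, S21 t Ψ⟫_ℂ‖ ^ 2 ≤ |r| ^ 2 * ‖⟪Φ (eIdx p), sqrtN1 Ψ⟫_ℂ‖ ^ 2 := by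
    rintro ⟨j, n⟩
    fin_cases j
    · simp only [Fin.mk_zero]
      rcases n with _ | n
      · rw [hS0 Ψ hΨ t 0]
        simp only [Nat.cast_zero, Real.sqrt_zero, Complex.ofReal_zero, mul_zero, zero_mul,
          norm_zero]
        rw [show ((0 : ℝ) ^ 2 = 0) by norm_num]
        positivity
      · rw [hS0 Ψ hΨ t (n + 1), eIdx_zero_succ, hN Ψ hΨ 1 n]
        simp only [norm_mul, mul_pow, norm_neg, Complex.norm_real, Real.norm_eq_abs, hexp1,
          Nat.cast_add, Nat.cast_one, Nat.add_sub_cancel]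
        exact le_of_eq (by rw [hr]; ring)
    · simp only [Fin.mk_one]
      rw [hS1 Ψ hΨ t n]
      rw [eIdx_one, hN Ψ hΨ 0 (n + 1)]
      rw [hr]
      simp only [norm_mul, mul_pow, norm_neg, Complex.norm_real, Real.norm_eq_abs, hexp2,
        Nat.cast_add, Nat.cast_one]
      have h1 : |Real.sqrt ((n : ℝ) + 1)| ^ 2 = (n : ℝ) + 1 := by
        rw [abs_of_nonneg (Real.sqrt_nonneg _), Real.sq_sqrt (by positivity)]
      have h2 : |Real.sqrt ((n : ℝ) + 1 + 1)| ^ 2 = (n : ℝ) + 2 := by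
        rw [abs_of_nonneg (Real.sqrt_nonneg _), Real.sq_sqrt (by positivity)]; ring
      nlinarith [sq_nonneg (‖⟪Φ (0, n + 1), Ψ⟫_ℂ‖), sq_nonneg (|lam * Real.sin (t * ω) / ω|),
        mul_nonneg (sq_nonneg (|lam * Real.sin (t * ω) / ω|)) (sq_nonneg (‖⟪Φ (0, n + 1), Ψ⟫_ℂ‖))]
  have hle : ‖S21 t Ψ‖ ^ 2 ≤ |r| ^ 2 * ‖sqrtN1 Ψ‖ ^ 2 := by
    rw [← hS.tsum_eq, ← hNh.tsum_eq]
    exact Summable.tsum_le_tsum_of_inj eIdx eIdx_inj (fun c _ => by positivity) hbound hS.summable hNh.summable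
  have h' : ‖S21 t Ψ‖ ^ 2 ≤ (|r| * ‖sqrtN1 Ψ‖) ^ 2 := by rw [mul_pow]; exact hle
  have h'' := Real.sqrt_le_sqrt h'
  rw [Real.sqrt_sq (norm_nonneg _), Real.sqrt_sq (by positivity)] at h''
  rw [← hc]
  exact h''
end
end

section
/- For real g > 0 and integer n ≥ 1, set α = g√(n-1) and β = 3g²√((n+2)(n+3)). Then √(α² + β²) - β ≥ 1/6 - 1/(216 g² n) - 7/(12 n). -/
set_option maxHeartbeats 1000000


/-- The numerical inequality underlying the RWA lower bound on Fock states: for `g > 0`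
and `n ≥ 1`, with `α = g√(n-1)` and `β = 3g²√((n+2)(n+3))`,
`√(α² + β²) - β ≥ 1/6 - 1/(216 g² n) - 7/(12 n)`. -/
theorem rwa_fock_lower_bound_numeric (g : ℝ) (n : ℕ) (hg : 0 < g) (hn : 1 ≤ n) :
    1 / 6 - 1 / (216 * g ^ 2 * n) - 7 / (12 * n)
      ≤ Real.sqrt ((g * Real.sqrt ((n : ℝ) - 1)) ^ 2
            + (3 * g ^ 2 * Real.sqrt (((n : ℝ) + 2) * ((n : ℝ) + 3))) ^ 2)
        - 3 * g ^ 2 * Real.sqrt (((n : ℝ) + 2) * ((n : ℝ) + 3)) := by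
  have hN : (1:ℝ) ≤ (n:ℝ) := by exact_mod_cast hn
  set N : ℝ := (n:ℝ) with hNdef
  have hN0 : (0:ℝ) < N := lt_of_lt_of_le one_pos hN
  have hs0 : (0:ℝ) ≤ (N+2)*(N+3) := by nlinarith
  set s := Real.sqrt ((N+2)*(N+3)) with hsdef
  have hs2 : s^2 = (N+2)*(N+3) := Real.sq_sqrt hs0
  have hsge : N ≤ s := by
    have h := Real.sqrt_le_sqrt (show N^2 ≤ (N+2)*(N+3) by nlinarith)
    rwa [Real.sqrt_sq hN0.le] at h
  have hsle : s ≤ N + 5/2 := by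
    have h := Real.sqrt_le_sqrt (show (N+2)*(N+3) ≤ (N+5/2)^2 by nlinarith)
    rwa [Real.sqrt_sq (by nlinarith : (0:ℝ) ≤ N+5/2)] at h
  have hspos : 0 < s := lt_of_lt_of_le hN0 hsge
  set A := g * Real.sqrt (N - 1) with hAdef
  set B := 3 * g^2 * s with hBdef
  have hA2 : A^2 = g^2 * (N-1) := by
    rw [hAdef, mul_pow, Real.sq_sqrt (by linarith)]
  have hA0 : 0 ≤ A := mul_nonneg hg.le (Real.sqrt_nonneg _)
  have hB : 0 < B := by positivity
  clear_value N s A B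
  have key : B*(4*B^2+3*A^2)/(4*B^2+A^2) ≤ Real.sqrt (A^2+B^2) := by
    have hden : (0:ℝ) < 4*B^2+A^2 := by positivity
    rw [Real.le_sqrt (by positivity) (by positivity)]
    rw [div_pow, div_le_iff₀ (by positivity)]
    nlinarith [sq_nonneg (A*A*A), sq_nonneg A, sq_nonneg B, hB.le, hA0]
  have heq : B*(4*B^2+3*A^2)/(4*B^2+A^2) - B = 2*A^2*B/(4*B^2+A^2) := by
    field_simp
    ring
  have step3 : A^2/(2*B) - A^4/(8*B^3) ≤ 2*A^2*B/(4*B^2+A^2) := by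
    rw [div_sub_div _ _ (by positivity) (by positivity),
      div_le_div_iff₀ (by positivity) (by positivity)]
    nlinarith [mul_nonneg (mul_nonneg (pow_nonneg hA0 6) hB.le) hB.le,
      mul_nonneg (pow_nonneg hA0 6) hB.le]
  have step4 : 1/6 - 7/(12*N) ≤ A^2/(2*B) := by
    have h1 : A^2/(2*B) = (N-1)/(6*s) := by
      rw [hA2, hBdef]
      field_simp
      ring
    have h2 : (N-1)/(6*(N+5/2)) ≤ (N-1)/(6*s) := by
      apply div_le_div_of_nonneg_left (by linarith) (by positivity) (by linarith)
    have h3 : 1/6 - 7/(12*N) ≤ (N-1)/(6*(N+5/2)) := by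
      have e : 1/6 - 7/(12*N) = (2*N-7)/(12*N) := by field_simp; ring
      rw [e, div_le_div_iff₀ (by positivity) (by positivity)]
      nlinarith
    rw [h1]; linarith
  have step5 : A^4/(8*B^3) ≤ 1/(216*g^2*N) := by
    have hA4 : A^4 = g^4*(N-1)^2 := by
      rw [show A^4 = (A^2)^2 by ring, hA2]; ring
    have hN3 : N^3 ≤ s^3 := pow_le_pow_left₀ hN0.le hsge 3
    have hs3 : N*(N-1)^2 ≤ s^3 := by nlinarith
    rw [hA4, hBdef, div_le_div_iff₀ (by positivity) (by positivity)]
    have hmul : g^6 * (N*(N-1)^2) ≤ g^6 * s^3 :=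
      mul_le_mul_of_nonneg_left hs3 (by positivity)
    have e1 : g^4*(N-1)^2*(216*g^2*N) = 216*(g^6*(N*(N-1)^2)) := by ring
    have e2 : (1:ℝ)*(8*(3*g^2*s)^3) = 216*(g^6*s^3) := by ring
    rw [e1, e2]
    linarith
  have hfinal : 1/6 - 1/(216*g^2*N) - 7/(12*N) ≤ Real.sqrt (A^2+B^2) - B := by
    have := sub_le_sub step4 step5
    calc 1/6 - 1/(216*g^2*N) - 7/(12*N)
        = (1/6 - 7/(12*N)) - 1/(216*g^2*N) := by ring
      _ ≤ A^2/(2*B) - A^4/(8*B^3) := sub_le_sub step4 step5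
      _ ≤ 2*A^2*B/(4*B^2+A^2) := step3
      _ = B*(4*B^2+3*A^2)/(4*B^2+A^2) - B := heq.symm
      _ ≤ Real.sqrt (A^2+B^2) - B := by linarith [key]
  exact hfinal
end

section
/- For every Ψ ∈ ℂ² ⊗ L²(ℝ) and every T > 0, the difference of evolutions under the quantum Rabi and Jaynes–Cummings Hamiltonians satisfies lim_{ω→∞} sup_{|t|≤T} ‖(e^{-itH_RWA} - e^{-itH})Ψ‖ = 0, with λ, Δ = Ω - ω fixed as ω → ∞. -/
open scoped InnerProductSpace

noncomputable section

section RwaAux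

lemma rwa_osc_aux {μ : ℝ} (hμ : 1 ≤ μ) (d₁ d₂ : ℂ) (K₁ K₂ : ℝ)
    (h g₁ g₂ r₁ r₂ : ℝ → ℂ)
    (hh : ∀ t, HasDerivAt h (d₁ * g₁ t + d₂ * g₂ t) t)
    (hg₁ : ∀ t, HasDerivAt g₁ (-(Complex.I * μ) * g₁ t + r₁ t) t)
    (hg₂ : ∀ t, HasDerivAt g₂ (Complex.I * μ * g₂ t + r₂ t) t)
    (hb₁ : ∀ t, ‖g₁ t‖ ≤ 1) (hb₂ : ∀ t, ‖g₂ t‖ ≤ 1)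
    (hr₁ : ∀ t, ‖r₁ t‖ ≤ K₁) (hr₂ : ∀ t, ‖r₂ t‖ ≤ K₂) (t : ℝ) :
    ‖h t - h 0‖ ≤ (2 * (‖d₁‖ + ‖d₂‖) + (‖d₁‖ * K₁ + ‖d₂‖ * K₂) * |t|) / μ := by
  have hμ0 : (0:ℝ) < μ := lt_of_lt_of_le one_pos hμ
  have hIμ : (Complex.I * (μ:ℂ)) ≠ 0 := by
    simp [Complex.ext_iff, hμ0.ne']
  have hnIμ : ‖(Complex.I * (μ:ℂ))‖ = μ := by
    simp [abs_of_pos hμ0]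
  set c₁ : ℂ := d₁ / (Complex.I * μ) with hc₁
  set c₂ : ℂ := d₂ / (Complex.I * μ) with hc₂
  have hnc₁ : ‖c₁‖ = ‖d₁‖ / μ := by rw [hc₁, norm_div, hnIμ]
  have hnc₂ : ‖c₂‖ = ‖d₂‖ / μ := by rw [hc₂, norm_div, hnIμ]
  set F : ℝ → ℂ := fun s => h s + c₁ * g₁ s - c₂ * g₂ s with hF
  have hFd : ∀ s, HasDerivAt F ((d₁ * r₁ s - d₂ * r₂ s) / (Complex.I * μ)) s := by
    intro s
    have H := ((hh s).add ((hg₁ s).const_mul c₁)).sub ((hg₂ s).const_mul c₂)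
    refine H.congr_deriv ?_
    rw [hc₁, hc₂]
    field_simp [show (μ:ℂ) ≠ 0 by exact_mod_cast hμ0.ne']
    ring
  have hC : ∀ s, ‖(d₁ * r₁ s - d₂ * r₂ s) / (Complex.I * μ)‖ ≤ (‖d₁‖ * K₁ + ‖d₂‖ * K₂) / μ := by
    intro s
    rw [norm_div, hnIμ]
    gcongr
    calc ‖d₁ * r₁ s - d₂ * r₂ s‖ ≤ ‖d₁ * r₁ s‖ + ‖d₂ * r₂ s‖ := norm_sub_le _ _
    _ ≤ ‖d₁‖ * K₁ + ‖d₂‖ * K₂ := by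
        rw [norm_mul, norm_mul]
        gcongr
        exacts [hr₁ s, hr₂ s]
  have hmvt : ‖F t - F 0‖ ≤ ((‖d₁‖ * K₁ + ‖d₂‖ * K₂) / μ) * |t| := by
    have := Convex.norm_image_sub_le_of_norm_hasDerivWithin_le
      (fun x (_ : x ∈ Set.univ) => (hFd x).hasDerivWithinAt) (fun x _ => hC x)
      convex_univ (Set.mem_univ 0) (Set.mem_univ t)
    simpa using this
  have key : ‖h t - h 0‖ ≤ ‖F t - F 0‖ + (‖c₁‖ * ‖g₁ t‖ + ‖c₂‖ * ‖g₂ t‖)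
      + (‖c₁‖ * ‖g₁ 0‖ + ‖c₂‖ * ‖g₂ 0‖) := by
    have hid : h t - h 0 = (F t - F 0) - (c₁ * g₁ t - c₂ * g₂ t) + (c₁ * g₁ 0 - c₂ * g₂ 0) := by
      rw [hF]; ring
    rw [hid]
    calc ‖(F t - F 0) - (c₁ * g₁ t - c₂ * g₂ t) + (c₁ * g₁ 0 - c₂ * g₂ 0)‖
        ≤ ‖(F t - F 0) - (c₁ * g₁ t - c₂ * g₂ t)‖ + ‖c₁ * g₁ 0 - c₂ * g₂ 0‖ := norm_add_le _ _
      _ ≤ ‖F t - F 0‖ + ‖c₁ * g₁ t - c₂ * g₂ t‖ + ‖c₁ * g₁ 0 - c₂ * g₂ 0‖ := by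
          gcongr; exact norm_sub_le _ _
      _ ≤ _ := by
          gcongr <;> calc ‖c₁ * g₁ _ - c₂ * g₂ _‖ ≤ ‖c₁ * g₁ _‖ + ‖c₂ * g₂ _‖ := norm_sub_le _ _
            _ = _ := by rw [norm_mul, norm_mul]
  have hb : (‖c₁‖ * ‖g₁ t‖ + ‖c₂‖ * ‖g₂ t‖) ≤ ‖d₁‖/μ + ‖d₂‖/μ := by
    rw [hnc₁, hnc₂]
    have h1 := hb₁ t; have h2 := hb₂ t
    have hd1 : (0:ℝ) ≤ ‖d₁‖/μ := by positivity
    have hd2 : (0:ℝ) ≤ ‖d₂‖/μ := by positivity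
    nlinarith [norm_nonneg (g₁ t), norm_nonneg (g₂ t)]
  have hb0 : (‖c₁‖ * ‖g₁ 0‖ + ‖c₂‖ * ‖g₂ 0‖) ≤ ‖d₁‖/μ + ‖d₂‖/μ := by
    rw [hnc₁, hnc₂]
    have h1 := hb₁ 0; have h2 := hb₂ 0
    have hd1 : (0:ℝ) ≤ ‖d₁‖/μ := by positivity
    have hd2 : (0:ℝ) ≤ ‖d₂‖/μ := by positivity
    nlinarith [norm_nonneg (g₁ 0), norm_nonneg (g₂ 0)]
  have hfin : ‖F t - F 0‖ + (‖d₁‖/μ + ‖d₂‖/μ) + (‖d₁‖/μ + ‖d₂‖/μ)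
      ≤ (2 * (‖d₁‖ + ‖d₂‖) + (‖d₁‖ * K₁ + ‖d₂‖ * K₂) * |t|) / μ := by
    have : (2 * (‖d₁‖ + ‖d₂‖) + (‖d₁‖ * K₁ + ‖d₂‖ * K₂) * |t|) / μ
        = ((‖d₁‖ * K₁ + ‖d₂‖ * K₂) / μ) * |t| + ((‖d₁‖/μ + ‖d₂‖/μ) + (‖d₁‖/μ + ‖d₂‖/μ)) := by
      field_simp
      ring
    rw [this]
    linarith [hmvt]
  linarith [key, hb, hb0, hfin]

lemma rwa_rem_bound {lam S s1 s2 s3 : ℝ} (hlam : 0 ≤ lam) (hs1 : 0 ≤ s1) (hs2 : 0 ≤ s2)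
    (hs3 : 0 ≤ s3) (h1 : s1 ≤ S) (h2 : s2 ≤ S) (h3 : s3 ≤ S) {x y z w p : ℂ}
    (hx : ‖x‖ ≤ 1) (hy : ‖y‖ ≤ 1) (hz : ‖z‖ ≤ 1) (hw : ‖w‖ ≤ 1) (hp : ‖p‖ ≤ 1) :
    ‖Complex.I * (lam:ℂ) * ((s1:ℂ) * x + (s2:ℂ) * y) * z - Complex.I * (lam:ℂ) * (s3:ℂ) * w * p‖
      ≤ 3 * lam * S := by
  have hS : 0 ≤ S := le_trans hs1 h1
  have e0 : ‖(s1:ℂ) * x + (s2:ℂ) * y‖ ≤ s1 + s2 := by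
    calc ‖(s1:ℂ) * x + (s2:ℂ) * y‖ ≤ ‖(s1:ℂ) * x‖ + ‖(s2:ℂ) * y‖ := norm_add_le _ _
      _ ≤ s1 + s2 := by
          simp only [norm_mul, Complex.norm_real, Real.norm_eq_abs,
            _root_.abs_of_nonneg hs1, _root_.abs_of_nonneg hs2]
          nlinarith [norm_nonneg x, norm_nonneg y]
  have e1 : ‖Complex.I * (lam:ℂ) * ((s1:ℂ) * x + (s2:ℂ) * y) * z‖ ≤ lam * (s1 + s2) := by
    simp only [norm_mul, Complex.norm_I, Complex.norm_real, Real.norm_eq_abs,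
      _root_.abs_of_nonneg hlam, one_mul]
    nlinarith [norm_nonneg ((s1:ℂ) * x + (s2:ℂ) * y), norm_nonneg z,
      mul_le_mul e0 hz (norm_nonneg z) (by linarith : (0:ℝ) ≤ s1 + s2)]
  have e2 : ‖Complex.I * (lam:ℂ) * (s3:ℂ) * w * p‖ ≤ lam * s3 := by
    simp only [norm_mul, Complex.norm_I, Complex.norm_real, Real.norm_eq_abs,
      _root_.abs_of_nonneg hlam, _root_.abs_of_nonneg hs3, one_mul]
    nlinarith [norm_nonneg w, norm_nonneg p, mul_nonneg hlam hs3,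
      mul_le_mul hw hp (norm_nonneg p) (by norm_num : (0:ℝ) ≤ 1)]
  calc ‖Complex.I * (lam:ℂ) * ((s1:ℂ) * x + (s2:ℂ) * y) * z
        - Complex.I * (lam:ℂ) * (s3:ℂ) * w * p‖
      ≤ ‖Complex.I * (lam:ℂ) * ((s1:ℂ) * x + (s2:ℂ) * y) * z‖
        + ‖Complex.I * (lam:ℂ) * (s3:ℂ) * w * p‖ := norm_sub_le _ _
    _ ≤ lam * (s1 + s2) + lam * s3 := add_le_add e1 e2
    _ ≤ 3 * lam * S := by nlinarith

lemma rwa_dcoef {HH : Type*} [NormedAddCommGroup HH] [InnerProductSpace ℂ HH]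
    (x : HH) (Hm : HH →ₗ[ℂ] HH) (f : ℝ → HH) (t : ℝ)
    (hf : HasDerivAt f ((-Complex.I) • Hm (f t)) t) :
    HasDerivAt (fun s => ⟪x, f s⟫_ℂ) (-Complex.I * ⟪x, Hm (f t)⟫_ℂ) t := by
  have h := ((innerSL ℂ x).restrictScalars ℝ).hasFDerivAt.comp_hasDerivAt t hf
  simp [inner_smul_right] at h ⊢
  exact h

end RwaAux

section RwaVanish

variable {HH : Type*} [NormedAddCommGroup HH] [InnerProductSpace ℂ HH]
  (Φ : HilbertBasis (Fin 2 × ℕ) ℂ HH) (lam Δ ω : ℝ) (v : ℝ → HH)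

lemma rwa_vanish_pair
    (dB0 : ∀ (n : ℕ) (s : ℝ), HasDerivAt (fun r => ⟪Φ (0, n), v r⟫_ℂ)
      (-Complex.I * ((((ω + Δ) / 2 + ω * n : ℝ) : ℂ) * ⟪Φ (0, n), v s⟫_ℂ
        + (lam : ℂ) * (Real.sqrt (n + 1) : ℂ) * ⟪Φ (1, n + 1), v s⟫_ℂ)) s)
    (dB1 : ∀ (n : ℕ) (s : ℝ), HasDerivAt (fun r => ⟪Φ (1, n), v r⟫_ℂ)
      (-Complex.I * (((-(ω + Δ) / 2 + ω * n : ℝ) : ℂ) * ⟪Φ (1, n), v s⟫_ℂ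
        + (lam : ℂ) * (Real.sqrt n : ℂ) * ⟪Φ (0, n - 1), v s⟫_ℂ)) s)
    (n : ℕ) (h0 : ⟪Φ (0, n), v 0⟫_ℂ = 0) (h1 : ⟪Φ (1, n + 1), v 0⟫_ℂ = 0) (s : ℝ) :
    ⟪Φ (0, n), v s⟫_ℂ = 0 ∧ ⟪Φ (1, n + 1), v s⟫_ℂ = 0 := by
  set f : ℝ → ℂ := fun r => (starRingEnd ℂ) ⟪Φ (0, n), v r⟫_ℂ * ⟪Φ (0, n), v r⟫_ℂ
    + (starRingEnd ℂ) ⟪Φ (1, n + 1), v r⟫_ℂ * ⟪Φ (1, n + 1), v r⟫_ℂ with hfdef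
  have hfd : ∀ r : ℝ, HasDerivAt f 0 r := by
    intro r
    have h1d := dB1 (n + 1) r
    rw [Nat.add_sub_cancel] at h1d
    have H := (((dB0 n r).star).mul (dB0 n r)).add ((h1d.star).mul h1d)
    refine H.congr_deriv ?_
    simp only [Complex.star_def, map_mul, map_add, map_neg, Complex.conj_I, Complex.conj_ofReal]
    push_cast
    ring
  have hcst := is_const_of_deriv_eq_zero (fun r => (hfd r).differentiableAt)
    (fun r => (hfd r).deriv) s 0
  have hf0 : f 0 = 0 := by
    simp only [hfdef, h0, h1, map_zero, zero_mul, mul_zero, add_zero]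
  rw [hf0] at hcst
  simp only [hfdef] at hcst
  rw [Complex.conj_mul', Complex.conj_mul'] at hcst
  have hre : (‖(⟪Φ (0, n), v s⟫_ℂ)‖ ^ 2 + ‖(⟪Φ (1, n + 1), v s⟫_ℂ)‖ ^ 2 : ℝ) = 0 := by
    exact_mod_cast hcst
  have e0 : ‖(⟪Φ (0, n), v s⟫_ℂ)‖ ^ 2 ≤ 0 := by
    nlinarith [sq_nonneg ‖(⟪Φ (1, n + 1), v s⟫_ℂ)‖]
  have e1 : ‖(⟪Φ (1, n + 1), v s⟫_ℂ)‖ ^ 2 ≤ 0 := by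
    nlinarith [sq_nonneg ‖(⟪Φ (0, n), v s⟫_ℂ)‖]
  constructor
  · exact norm_eq_zero.mp ((pow_eq_zero_iff (by norm_num : (2:ℕ) ≠ 0)).mp
      (le_antisymm e0 (sq_nonneg _)))
  · exact norm_eq_zero.mp ((pow_eq_zero_iff (by norm_num : (2:ℕ) ≠ 0)).mp
      (le_antisymm e1 (sq_nonneg _)))

lemma rwa_vanish_sing
    (dB1 : ∀ (n : ℕ) (s : ℝ), HasDerivAt (fun r => ⟪Φ (1, n), v r⟫_ℂ)
      (-Complex.I * (((-(ω + Δ) / 2 + ω * n : ℝ) : ℂ) * ⟪Φ (1, n), v s⟫_ℂ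
        + (lam : ℂ) * (Real.sqrt n : ℂ) * ⟪Φ (0, n - 1), v s⟫_ℂ)) s)
    (h0 : ⟪Φ (1, 0), v 0⟫_ℂ = 0) (s : ℝ) :
    ⟪Φ (1, 0), v s⟫_ℂ = 0 := by
  set f : ℝ → ℂ := fun r => (starRingEnd ℂ) ⟪Φ (1, 0), v r⟫_ℂ * ⟪Φ (1, 0), v r⟫_ℂ with hfdef
  have hfd : ∀ r : ℝ, HasDerivAt f 0 r := by
    intro r
    have h1d := dB1 0 r
    have H := (h1d.star).mul h1d
    refine H.congr_deriv ?_
    simp only [Complex.star_def, map_mul, map_add, map_neg, Complex.conj_I, Complex.conj_ofReal]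
    push_cast
    simp only [Real.sqrt_zero, Complex.ofReal_zero, mul_zero, zero_mul, add_zero]
    ring
  have hcst := is_const_of_deriv_eq_zero (fun r => (hfd r).differentiableAt)
    (fun r => (hfd r).deriv) s 0
  have hf0 : f 0 = 0 := by
    simp only [hfdef, h0, map_zero, zero_mul, mul_zero]
  rw [hf0] at hcst
  simp only [hfdef] at hcst
  rw [Complex.conj_mul'] at hcst
  have hre : (‖(⟪Φ (1, 0), v s⟫_ℂ)‖ ^ 2 : ℝ) = 0 := by exact_mod_cast hcst
  exact norm_eq_zero.mp ((pow_eq_zero_iff (by norm_num : (2:ℕ) ≠ 0)).mp hre)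

end RwaVanish

section RwaPair

variable {HH : Type*} [NormedAddCommGroup HH] [InnerProductSpace ℂ HH] [CompleteSpace HH]

lemma rwa_pair_est
    (Φ : HilbertBasis (Fin 2 × ℕ) ℂ HH) (lam Δ ω : ℝ) (u v : ℝ → HH)
    (hlam : 0 < lam) (hω0 : 0 < ω) (hμ1 : 1 ≤ 2 * ω + Δ)
    (hA : ∀ (k : Fin 2 × ℕ) (s : ℝ), ‖(⟪Φ k, u s⟫_ℂ)‖ ≤ 1)
    (hB : ∀ (k : Fin 2 × ℕ) (s : ℝ), ‖(⟪Φ k, v s⟫_ℂ)‖ ≤ 1)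
    (hun : ∀ s : ℝ, ‖u s‖ = 1) (hvn : ∀ s : ℝ, ‖v s‖ = 1)
    (dA0 : ∀ (n : ℕ) (s : ℝ), HasDerivAt (fun r => ⟪Φ (0, n), u r⟫_ℂ)
      (-Complex.I * ((((ω + Δ) / 2 + ω * n : ℝ) : ℂ) * ⟪Φ (0, n), u s⟫_ℂ
        + (lam : ℂ) * ((Real.sqrt (n + 1) : ℂ) * ⟪Φ (1, n + 1), u s⟫_ℂ
            + (Real.sqrt n : ℂ) * ⟪Φ (1, n - 1), u s⟫_ℂ))) s)
    (dA1 : ∀ (n : ℕ) (s : ℝ), HasDerivAt (fun r => ⟪Φ (1, n), u r⟫_ℂ)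
      (-Complex.I * (((-(ω + Δ) / 2 + ω * n : ℝ) : ℂ) * ⟪Φ (1, n), u s⟫_ℂ
        + (lam : ℂ) * ((Real.sqrt (n + 1) : ℂ) * ⟪Φ (0, n + 1), u s⟫_ℂ
            + (Real.sqrt n : ℂ) * ⟪Φ (0, n - 1), u s⟫_ℂ))) s)
    (dB0 : ∀ (n : ℕ) (s : ℝ), HasDerivAt (fun r => ⟪Φ (0, n), v r⟫_ℂ)
      (-Complex.I * ((((ω + Δ) / 2 + ω * n : ℝ) : ℂ) * ⟪Φ (0, n), v s⟫_ℂ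
        + (lam : ℂ) * (Real.sqrt (n + 1) : ℂ) * ⟪Φ (1, n + 1), v s⟫_ℂ)) s)
    (dB1 : ∀ (n : ℕ) (s : ℝ), HasDerivAt (fun r => ⟪Φ (1, n), v r⟫_ℂ)
      (-Complex.I * (((-(ω + Δ) / 2 + ω * n : ℝ) : ℂ) * ⟪Φ (1, n), v s⟫_ℂ
        + (lam : ℂ) * (Real.sqrt n : ℂ) * ⟪Φ (0, n - 1), v s⟫_ℂ)) s)
    (k0 : Fin 2 × ℕ) (m : ℕ)
    (hu0 : ∀ k, ⟪Φ k, u 0⟫_ℂ = if k = k0 then 1 else 0)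
    (hv0 : ∀ k, ⟪Φ k, v 0⟫_ℂ = if k = k0 then 1 else 0)
    (hk0 : k0 = ((0 : Fin 2), m) ∨ k0 = ((1 : Fin 2), m + 1))
    (T t : ℝ) (hT : 0 ≤ T) (ht : |t| ≤ T) :
    ‖v t - u t‖ ^ 2
      ≤ 2 * (2 * (lam * Real.sqrt (m : ℝ) + lam * Real.sqrt ((m : ℝ) + 2))
          + (lam * Real.sqrt (m : ℝ) + lam * Real.sqrt ((m : ℝ) + 2))
            * (3 * lam * Real.sqrt ((m : ℝ) + 3)) * T) / (2 * ω + Δ) := by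
  have hlam' : (0:ℝ) ≤ lam := hlam.le
  have hμ0 : (0:ℝ) < 2 * ω + Δ := lt_of_lt_of_le one_pos hμ1
  have hconjA : ∀ (k : Fin 2 × ℕ) (s : ℝ), ‖(starRingEnd ℂ) (⟪Φ k, u s⟫_ℂ)‖ ≤ 1 := by
    intro k s; rw [RCLike.norm_conj]; exact hA k s
  have hgb : ∀ (k k' : Fin 2 × ℕ) (s : ℝ),
      ‖(starRingEnd ℂ) (⟪Φ k, u s⟫_ℂ) * (⟪Φ k', v s⟫_ℂ)‖ ≤ 1 := by
    intro k k' s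
    rw [norm_mul, RCLike.norm_conj]
    nlinarith [hA k s, hB k' s, norm_nonneg (⟪Φ k, u s⟫_ℂ), norm_nonneg (⟪Φ k', v s⟫_ℂ)]
  -- vanishing outside the invariant block
  have hvan : ∀ k : Fin 2 × ℕ, k ≠ ((0 : Fin 2), m) → k ≠ ((1 : Fin 2), m + 1) →
      ∀ s : ℝ, ⟪Φ k, v s⟫_ℂ = 0 := by
    rintro ⟨j, n⟩ hne1 hne2 s
    have hini : ∀ k : Fin 2 × ℕ, k ≠ k0 → ⟪Φ k, v 0⟫_ℂ = 0 := fun k hk => by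
      rw [hv0 k, if_neg hk]
    have hne_k0 : ∀ k : Fin 2 × ℕ, k ≠ ((0 : Fin 2), m) → k ≠ ((1 : Fin 2), m + 1) → k ≠ k0 := by
      intro k h1 h2
      rcases hk0 with h | h <;> rw [h] <;> assumption
    have hnm : ∀ n' : ℕ, n' ≠ m →
        (⟪Φ (0, n'), v s⟫_ℂ = 0 ∧ ⟪Φ (1, n' + 1), v s⟫_ℂ = 0) := by
      intro n' hn'
      refine rwa_vanish_pair Φ lam Δ ω v dB0 dB1 n'
        (hini _ (hne_k0 _ ?_ ?_)) (hini _ (hne_k0 _ ?_ ?_)) s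
      · simp [Prod.ext_iff, hn']
      · simp [Prod.ext_iff]
      · simp [Prod.ext_iff]
      · simp [Prod.ext_iff, hn']
    fin_cases j
    · have hn : n ≠ m := by simpa [Prod.ext_iff] using hne1
      exact (hnm n hn).1
    · rcases n with _ | n'
      · exact rwa_vanish_sing Φ lam Δ ω v dB1
          (hini _ (hne_k0 _ (by simp [Prod.ext_iff]) (by simp [Prod.ext_iff]))) s
      · have hn : n' ≠ m := by simpa [Prod.ext_iff] using hne2
        exact (hnm n' hn).2
  -- the two-mode overlap function
  set hf : ℝ → ℂ := fun s => (starRingEnd ℂ) (⟪Φ (0, m), u s⟫_ℂ) * (⟪Φ (0, m), v s⟫_ℂ)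
    + (starRingEnd ℂ) (⟪Φ (1, m + 1), u s⟫_ℂ) * (⟪Φ (1, m + 1), v s⟫_ℂ) with hfdef
  have hinner : ∀ s : ℝ, ⟪u s, v s⟫_ℂ = hf s := by
    intro s
    rw [← Φ.tsum_inner_mul_inner (u s) (v s)]
    rw [tsum_eq_sum (s := {((0 : Fin 2), m), ((1 : Fin 2), m + 1)}) ?_]
    · rw [Finset.sum_pair (by simp : ((0 : Fin 2), m) ≠ ((1 : Fin 2), m + 1))]
      rw [hfdef]
      rw [← inner_conj_symm (u s) (Φ (0, m)), ← inner_conj_symm (u s) (Φ (1, m + 1))]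
    · intro k hk
      simp only [Finset.mem_insert, Finset.mem_singleton] at hk
      push_neg at hk
      rw [hvan k hk.1 hk.2 s, mul_zero]
  have hfun0 : hf 0 = 1 := by
    rw [hfdef]
    simp only [hu0, hv0]
    rcases hk0 with h | h <;> subst h <;> simp
  have hns : ∀ s : ℝ, ‖v s - u s‖ ^ 2 = 2 - 2 * (hf s).re := by
    intro s
    have hsq := norm_sub_sq (𝕜 := ℂ) (v s) (u s)
    rw [hvn s, hun s] at hsq
    have h1 : ⟪v s, u s⟫_ℂ = (starRingEnd ℂ) (hf s) := by
      rw [← inner_conj_symm, hinner s]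
    rw [h1] at hsq
    rw [hsq]
    simp [Complex.conj_re]
    ring
  -- derivative of hf
  have hh : ∀ s : ℝ, HasDerivAt hf
      (Complex.I * (lam : ℂ) * (Real.sqrt (m : ℝ) : ℂ)
          * ((starRingEnd ℂ) (⟪Φ (1, m - 1), u s⟫_ℂ) * (⟪Φ (0, m), v s⟫_ℂ))
        + Complex.I * (lam : ℂ) * (Real.sqrt ((m : ℝ) + 2) : ℂ)
          * ((starRingEnd ℂ) (⟪Φ (0, m + 2), u s⟫_ℂ) * (⟪Φ (1, m + 1), v s⟫_ℂ))) s := by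
    intro s
    have hBd := dB1 (m + 1) s
    rw [Nat.add_sub_cancel] at hBd
    have H := (((dA0 m s).star).mul (dB0 m s)).add (((dA1 (m + 1) s).star).mul hBd)
    refine H.congr_deriv ?_
    simp only [Complex.star_def, map_mul, map_add, map_neg, Complex.conj_I, Complex.conj_ofReal]
    push_cast
    ring
  -- oscillation equation for g2
  have hg2 : ∀ s : ℝ, HasDerivAt
      (fun r => (starRingEnd ℂ) (⟪Φ (0, m + 2), u r⟫_ℂ) * (⟪Φ (1, m + 1), v r⟫_ℂ))
      (Complex.I * ((2 * ω + Δ : ℝ) : ℂ)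
          * ((starRingEnd ℂ) (⟪Φ (0, m + 2), u s⟫_ℂ) * (⟪Φ (1, m + 1), v s⟫_ℂ))
        + (Complex.I * (lam : ℂ) * ((Real.sqrt ((m : ℝ) + 3) : ℂ)
              * (starRingEnd ℂ) (⟪Φ (1, m + 3), u s⟫_ℂ)
            + (Real.sqrt ((m : ℝ) + 2) : ℂ) * (starRingEnd ℂ) (⟪Φ (1, m + 1), u s⟫_ℂ))
            * (⟪Φ (1, m + 1), v s⟫_ℂ)
          - Complex.I * (lam : ℂ) * (Real.sqrt ((m : ℝ) + 1) : ℂ)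
            * (starRingEnd ℂ) (⟪Φ (0, m + 2), u s⟫_ℂ) * (⟪Φ (0, m), v s⟫_ℂ))) s := by
    intro s
    have hBd := dB1 (m + 1) s
    rw [Nat.add_sub_cancel] at hBd
    have H := ((dA0 (m + 2) s).star).mul hBd
    refine H.congr_deriv ?_
    simp only [Complex.star_def, map_mul, map_add, map_neg, Complex.conj_I, Complex.conj_ofReal]
    push_cast
    ring
  have hr2b : ∀ s : ℝ,
      ‖Complex.I * (lam : ℂ) * ((Real.sqrt ((m : ℝ) + 3) : ℂ)
            * (starRingEnd ℂ) (⟪Φ (1, m + 3), u s⟫_ℂ)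
          + (Real.sqrt ((m : ℝ) + 2) : ℂ) * (starRingEnd ℂ) (⟪Φ (1, m + 1), u s⟫_ℂ))
          * (⟪Φ (1, m + 1), v s⟫_ℂ)
        - Complex.I * (lam : ℂ) * (Real.sqrt ((m : ℝ) + 1) : ℂ)
          * (starRingEnd ℂ) (⟪Φ (0, m + 2), u s⟫_ℂ) * (⟪Φ (0, m), v s⟫_ℂ)‖
        ≤ 3 * lam * Real.sqrt ((m : ℝ) + 3) := by
    intro s
    exact rwa_rem_bound hlam' (Real.sqrt_nonneg _) (Real.sqrt_nonneg _) (Real.sqrt_nonneg _)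
      le_rfl (Real.sqrt_le_sqrt (by linarith)) (Real.sqrt_le_sqrt (by linarith))
      (hconjA _ s) (hconjA _ s) (hB _ s) (hconjA _ s) (hB _ s)
  -- case split on m
  rcases Nat.eq_zero_or_pos m with hm0 | hmpos
  · -- m = 0 : no lower counter-rotating term
    have hh0 : ∀ s : ℝ, HasDerivAt hf
        ((0:ℂ) * ((fun _ : ℝ => (0:ℂ)) s)
          + Complex.I * (lam : ℂ) * (Real.sqrt ((m : ℝ) + 2) : ℂ)
            * ((fun r => (starRingEnd ℂ) (⟪Φ (0, m + 2), u r⟫_ℂ)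
                * (⟪Φ (1, m + 1), v r⟫_ℂ)) s)) s := by
      intro s
      convert hh s using 1
      simp only [hm0, Nat.cast_zero, Real.sqrt_zero, Complex.ofReal_zero]
      ring
    have Hosc := rwa_osc_aux hμ1 (0:ℂ)
      (Complex.I * (lam : ℂ) * (Real.sqrt ((m : ℝ) + 2) : ℂ))
      0 (3 * lam * Real.sqrt ((m : ℝ) + 3))
      hf (fun _ => 0)
      (fun r => (starRingEnd ℂ) (⟪Φ (0, m + 2), u r⟫_ℂ) * (⟪Φ (1, m + 1), v r⟫_ℂ))
      (fun _ => 0)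
      (fun s => Complex.I * (lam : ℂ) * ((Real.sqrt ((m : ℝ) + 3) : ℂ)
              * (starRingEnd ℂ) (⟪Φ (1, m + 3), u s⟫_ℂ)
            + (Real.sqrt ((m : ℝ) + 2) : ℂ) * (starRingEnd ℂ) (⟪Φ (1, m + 1), u s⟫_ℂ))
            * (⟪Φ (1, m + 1), v s⟫_ℂ)
          - Complex.I * (lam : ℂ) * (Real.sqrt ((m : ℝ) + 1) : ℂ)
            * (starRingEnd ℂ) (⟪Φ (0, m + 2), u s⟫_ℂ) * (⟪Φ (0, m), v s⟫_ℂ))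
      hh0
      (fun s => by
        have := hasDerivAt_const s (0:ℂ)
        refine this.congr_deriv ?_
        ring)
      hg2
      (fun s => by simp) (fun s => hgb _ _ s)
      (fun s => by simp) hr2b t
    have hd2 : ‖Complex.I * (lam : ℂ) * (Real.sqrt ((m : ℝ) + 2) : ℂ)‖
        = lam * Real.sqrt ((m : ℝ) + 2) := by
      simp [norm_mul, Complex.norm_I, Complex.norm_real, Real.norm_eq_abs,
        _root_.abs_of_nonneg hlam', _root_.abs_of_nonneg (Real.sqrt_nonneg _)]
    rw [hfun0, hd2, norm_zero] at Hosc
    have hD1 : (0:ℝ) ≤ lam * Real.sqrt (m : ℝ) := by positivity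
    have hD2 : (0:ℝ) ≤ lam * Real.sqrt ((m : ℝ) + 2) := by positivity
    have hK : (0:ℝ) ≤ 3 * lam * Real.sqrt ((m : ℝ) + 3) := by positivity
    have habs : (0:ℝ) ≤ |t| := abs_nonneg t
    calc ‖v t - u t‖ ^ 2 = 2 - 2 * (hf t).re := hns t
      _ = 2 * ((1:ℂ) - hf t).re := by
          simp only [Complex.sub_re, Complex.one_re]; ring
      _ ≤ 2 * ‖(1:ℂ) - hf t‖ := by
          have h := Complex.re_le_norm ((1:ℂ) - hf t)
          linarith
      _ = 2 * ‖hf t - 1‖ := by rw [norm_sub_rev]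
      _ ≤ 2 * ((2 * (0 + lam * Real.sqrt ((m : ℝ) + 2))
            + (0 * 0 + lam * Real.sqrt ((m : ℝ) + 2) * (3 * lam * Real.sqrt ((m : ℝ) + 3))) * |t|)
            / (2 * ω + Δ)) := by linarith
      _ ≤ 2 * ((2 * (lam * Real.sqrt (m : ℝ) + lam * Real.sqrt ((m : ℝ) + 2))
            + (lam * Real.sqrt (m : ℝ) + lam * Real.sqrt ((m : ℝ) + 2))
              * (3 * lam * Real.sqrt ((m : ℝ) + 3)) * T) / (2 * ω + Δ)) := by
          gcongr 2 * (?_ / (2 * ω + Δ))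
          nlinarith [mul_le_mul_of_nonneg_left ht (mul_nonneg hD2 hK),
            mul_nonneg (mul_nonneg hD1 hK) hT]
      _ = 2 * (2 * (lam * Real.sqrt (m : ℝ) + lam * Real.sqrt ((m : ℝ) + 2))
            + (lam * Real.sqrt (m : ℝ) + lam * Real.sqrt ((m : ℝ) + 2))
              * (3 * lam * Real.sqrt ((m : ℝ) + 3)) * T) / (2 * ω + Δ) := by
          rw [mul_div_assoc]
  · -- m = p + 1
    obtain ⟨p, hmp⟩ : ∃ p, m = p + 1 := ⟨m - 1, by omega⟩
    rw [hmp] at hh hg2 hr2b ⊢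
    simp only [Nat.add_sub_cancel] at hh
    have hg1 : ∀ s : ℝ, HasDerivAt
        (fun r => (starRingEnd ℂ) (⟪Φ (1, p), u r⟫_ℂ) * (⟪Φ (0, p + 1), v r⟫_ℂ))
        (-(Complex.I * ((2 * ω + Δ : ℝ) : ℂ))
            * ((starRingEnd ℂ) (⟪Φ (1, p), u s⟫_ℂ) * (⟪Φ (0, p + 1), v s⟫_ℂ))
          + (Complex.I * (lam : ℂ) * ((Real.sqrt ((p : ℝ) + 1) : ℂ)
                * (starRingEnd ℂ) (⟪Φ (0, p + 1), u s⟫_ℂ)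
              + (Real.sqrt (p : ℝ) : ℂ) * (starRingEnd ℂ) (⟪Φ (0, p - 1), u s⟫_ℂ))
              * (⟪Φ (0, p + 1), v s⟫_ℂ)
            - Complex.I * (lam : ℂ) * (Real.sqrt ((p : ℝ) + 2) : ℂ)
              * (starRingEnd ℂ) (⟪Φ (1, p), u s⟫_ℂ) * (⟪Φ (1, p + 2), v s⟫_ℂ))) s := by
      intro s
      have H := ((dA1 p s).star).mul (dB0 (p + 1) s)
      refine H.congr_deriv ?_
      simp only [Complex.star_def, map_mul, map_add, map_neg, Complex.conj_I,
        Complex.conj_ofReal]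
      push_cast
      ring
    have hr1b : ∀ s : ℝ,
        ‖Complex.I * (lam : ℂ) * ((Real.sqrt ((p : ℝ) + 1) : ℂ)
              * (starRingEnd ℂ) (⟪Φ (0, p + 1), u s⟫_ℂ)
            + (Real.sqrt (p : ℝ) : ℂ) * (starRingEnd ℂ) (⟪Φ (0, p - 1), u s⟫_ℂ))
            * (⟪Φ (0, p + 1), v s⟫_ℂ)
          - Complex.I * (lam : ℂ) * (Real.sqrt ((p : ℝ) + 2) : ℂ)
            * (starRingEnd ℂ) (⟪Φ (1, p), u s⟫_ℂ) * (⟪Φ (1, p + 2), v s⟫_ℂ)‖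
          ≤ 3 * lam * Real.sqrt (((p + 1 : ℕ) : ℝ) + 3) := by
      intro s
      exact rwa_rem_bound hlam' (Real.sqrt_nonneg _) (Real.sqrt_nonneg _) (Real.sqrt_nonneg _)
        (Real.sqrt_le_sqrt (by push_cast; linarith))
        (Real.sqrt_le_sqrt (by push_cast; linarith))
        (Real.sqrt_le_sqrt (by push_cast; linarith))
        (hconjA _ s) (hconjA _ s) (hB _ s) (hconjA _ s) (hB _ s)
    have Hosc := rwa_osc_aux hμ1
      (Complex.I * (lam : ℂ) * (Real.sqrt (((p + 1 : ℕ) : ℝ)) : ℂ))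
      (Complex.I * (lam : ℂ) * (Real.sqrt (((p + 1 : ℕ) : ℝ) + 2) : ℂ))
      (3 * lam * Real.sqrt (((p + 1 : ℕ) : ℝ) + 3))
      (3 * lam * Real.sqrt (((p + 1 : ℕ) : ℝ) + 3))
      hf
      (fun r => (starRingEnd ℂ) (⟪Φ (1, p), u r⟫_ℂ) * (⟪Φ (0, p + 1), v r⟫_ℂ))
      (fun r => (starRingEnd ℂ) (⟪Φ (0, p + 1 + 2), u r⟫_ℂ) * (⟪Φ (1, p + 1 + 1), v r⟫_ℂ))
      (fun s => Complex.I * (lam : ℂ) * ((Real.sqrt ((p : ℝ) + 1) : ℂ)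
              * (starRingEnd ℂ) (⟪Φ (0, p + 1), u s⟫_ℂ)
            + (Real.sqrt (p : ℝ) : ℂ) * (starRingEnd ℂ) (⟪Φ (0, p - 1), u s⟫_ℂ))
            * (⟪Φ (0, p + 1), v s⟫_ℂ)
          - Complex.I * (lam : ℂ) * (Real.sqrt ((p : ℝ) + 2) : ℂ)
            * (starRingEnd ℂ) (⟪Φ (1, p), u s⟫_ℂ) * (⟪Φ (1, p + 2), v s⟫_ℂ))
      (fun s => Complex.I * (lam : ℂ) * ((Real.sqrt (((p + 1 : ℕ) : ℝ) + 3) : ℂ)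
              * (starRingEnd ℂ) (⟪Φ (1, p + 1 + 3), u s⟫_ℂ)
            + (Real.sqrt (((p + 1 : ℕ) : ℝ) + 2) : ℂ)
              * (starRingEnd ℂ) (⟪Φ (1, p + 1 + 1), u s⟫_ℂ))
            * (⟪Φ (1, p + 1 + 1), v s⟫_ℂ)
          - Complex.I * (lam : ℂ) * (Real.sqrt (((p + 1 : ℕ) : ℝ) + 1) : ℂ)
            * (starRingEnd ℂ) (⟪Φ (0, p + 1 + 2), u s⟫_ℂ) * (⟪Φ (0, p + 1), v s⟫_ℂ))
      hh hg1 hg2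
      (fun s => hgb _ _ s) (fun s => hgb _ _ s)
      hr1b hr2b t
    have hd1 : ‖Complex.I * (lam : ℂ) * (Real.sqrt (((p + 1 : ℕ) : ℝ)) : ℂ)‖
        = lam * Real.sqrt (((p + 1 : ℕ) : ℝ)) := by
      simp [norm_mul, Complex.norm_I, Complex.norm_real, Real.norm_eq_abs,
        _root_.abs_of_nonneg hlam', _root_.abs_of_nonneg (Real.sqrt_nonneg _)]
    have hd2 : ‖Complex.I * (lam : ℂ) * (Real.sqrt (((p + 1 : ℕ) : ℝ) + 2) : ℂ)‖
        = lam * Real.sqrt (((p + 1 : ℕ) : ℝ) + 2) := by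
      simp [norm_mul, Complex.norm_I, Complex.norm_real, Real.norm_eq_abs,
        _root_.abs_of_nonneg hlam', _root_.abs_of_nonneg (Real.sqrt_nonneg _)]
    rw [hfun0, hd1, hd2] at Hosc
    have hD1 : (0:ℝ) ≤ lam * Real.sqrt (((p + 1 : ℕ) : ℝ)) := by positivity
    have hD2 : (0:ℝ) ≤ lam * Real.sqrt (((p + 1 : ℕ) : ℝ) + 2) := by positivity
    have hK : (0:ℝ) ≤ 3 * lam * Real.sqrt (((p + 1 : ℕ) : ℝ) + 3) := by positivity
    have habs : (0:ℝ) ≤ |t| := abs_nonneg t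
    calc ‖v t - u t‖ ^ 2 = 2 - 2 * (hf t).re := hns t
      _ = 2 * ((1:ℂ) - hf t).re := by
          simp only [Complex.sub_re, Complex.one_re]; ring
      _ ≤ 2 * ‖(1:ℂ) - hf t‖ := by
          have h := Complex.re_le_norm ((1:ℂ) - hf t)
          linarith
      _ = 2 * ‖hf t - 1‖ := by rw [norm_sub_rev]
      _ ≤ 2 * ((2 * (lam * Real.sqrt (((p + 1 : ℕ) : ℝ)) + lam * Real.sqrt (((p + 1 : ℕ) : ℝ) + 2))
            + (lam * Real.sqrt (((p + 1 : ℕ) : ℝ)) * (3 * lam * Real.sqrt (((p + 1 : ℕ) : ℝ) + 3))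
              + lam * Real.sqrt (((p + 1 : ℕ) : ℝ) + 2)
                * (3 * lam * Real.sqrt (((p + 1 : ℕ) : ℝ) + 3))) * |t|)
            / (2 * ω + Δ)) := by linarith
      _ ≤ 2 * ((2 * (lam * Real.sqrt (((p + 1 : ℕ) : ℝ)) + lam * Real.sqrt (((p + 1 : ℕ) : ℝ) + 2))
            + (lam * Real.sqrt (((p + 1 : ℕ) : ℝ)) + lam * Real.sqrt (((p + 1 : ℕ) : ℝ) + 2))
              * (3 * lam * Real.sqrt (((p + 1 : ℕ) : ℝ) + 3)) * T) / (2 * ω + Δ)) := by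
          gcongr 2 * (?_ / (2 * ω + Δ))
          nlinarith [mul_le_mul_of_nonneg_left ht (mul_nonneg hD2 hK),
            mul_le_mul_of_nonneg_left ht (mul_nonneg hD1 hK)]
      _ = 2 * (2 * (lam * Real.sqrt (((p + 1 : ℕ) : ℝ)) + lam * Real.sqrt (((p + 1 : ℕ) : ℝ) + 2))
            + (lam * Real.sqrt (((p + 1 : ℕ) : ℝ)) + lam * Real.sqrt (((p + 1 : ℕ) : ℝ) + 2))
              * (3 * lam * Real.sqrt (((p + 1 : ℕ) : ℝ) + 3)) * T) / (2 * ω + Δ) := by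
          rw [mul_div_assoc]

end RwaPair

section RwaSing

variable {HH : Type*} [NormedAddCommGroup HH] [InnerProductSpace ℂ HH] [CompleteSpace HH]

lemma rwa_sing_est
    (Φ : HilbertBasis (Fin 2 × ℕ) ℂ HH) (lam Δ ω : ℝ) (u v : ℝ → HH)
    (hlam : 0 < lam) (hω0 : 0 < ω) (hμ1 : 1 ≤ 2 * ω + Δ)
    (hA : ∀ (k : Fin 2 × ℕ) (s : ℝ), ‖(⟪Φ k, u s⟫_ℂ)‖ ≤ 1)
    (hB : ∀ (k : Fin 2 × ℕ) (s : ℝ), ‖(⟪Φ k, v s⟫_ℂ)‖ ≤ 1)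
    (hun : ∀ s : ℝ, ‖u s‖ = 1) (hvn : ∀ s : ℝ, ‖v s‖ = 1)
    (dA0 : ∀ (n : ℕ) (s : ℝ), HasDerivAt (fun r => ⟪Φ (0, n), u r⟫_ℂ)
      (-Complex.I * ((((ω + Δ) / 2 + ω * n : ℝ) : ℂ) * ⟪Φ (0, n), u s⟫_ℂ
        + (lam : ℂ) * ((Real.sqrt (n + 1) : ℂ) * ⟪Φ (1, n + 1), u s⟫_ℂ
            + (Real.sqrt n : ℂ) * ⟪Φ (1, n - 1), u s⟫_ℂ))) s)
    (dA1 : ∀ (n : ℕ) (s : ℝ), HasDerivAt (fun r => ⟪Φ (1, n), u r⟫_ℂ)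
      (-Complex.I * (((-(ω + Δ) / 2 + ω * n : ℝ) : ℂ) * ⟪Φ (1, n), u s⟫_ℂ
        + (lam : ℂ) * ((Real.sqrt (n + 1) : ℂ) * ⟪Φ (0, n + 1), u s⟫_ℂ
            + (Real.sqrt n : ℂ) * ⟪Φ (0, n - 1), u s⟫_ℂ))) s)
    (dB0 : ∀ (n : ℕ) (s : ℝ), HasDerivAt (fun r => ⟪Φ (0, n), v r⟫_ℂ)
      (-Complex.I * ((((ω + Δ) / 2 + ω * n : ℝ) : ℂ) * ⟪Φ (0, n), v s⟫_ℂ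
        + (lam : ℂ) * (Real.sqrt (n + 1) : ℂ) * ⟪Φ (1, n + 1), v s⟫_ℂ)) s)
    (dB1 : ∀ (n : ℕ) (s : ℝ), HasDerivAt (fun r => ⟪Φ (1, n), v r⟫_ℂ)
      (-Complex.I * (((-(ω + Δ) / 2 + ω * n : ℝ) : ℂ) * ⟪Φ (1, n), v s⟫_ℂ
        + (lam : ℂ) * (Real.sqrt n : ℂ) * ⟪Φ (0, n - 1), v s⟫_ℂ)) s)
    (k0 : Fin 2 × ℕ) (m : ℕ)
    (hu0 : ∀ k, ⟪Φ k, u 0⟫_ℂ = if k = k0 then 1 else 0)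
    (hv0 : ∀ k, ⟪Φ k, v 0⟫_ℂ = if k = k0 then 1 else 0)
    (hk0 : k0 = ((1 : Fin 2), 0))
    (T t : ℝ) (hT : 0 ≤ T) (ht : |t| ≤ T) :
    ‖v t - u t‖ ^ 2
      ≤ 2 * (2 * (lam * Real.sqrt (m : ℝ) + lam * Real.sqrt ((m : ℝ) + 2))
          + (lam * Real.sqrt (m : ℝ) + lam * Real.sqrt ((m : ℝ) + 2))
            * (3 * lam * Real.sqrt ((m : ℝ) + 3)) * T) / (2 * ω + Δ) := by
  subst hk0
  have hlam' : (0:ℝ) ≤ lam := hlam.le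
  have hμ0 : (0:ℝ) < 2 * ω + Δ := lt_of_lt_of_le one_pos hμ1
  have hconjA : ∀ (k : Fin 2 × ℕ) (s : ℝ), ‖(starRingEnd ℂ) (⟪Φ k, u s⟫_ℂ)‖ ≤ 1 := by
    intro k s; rw [RCLike.norm_conj]; exact hA k s
  have hgb : ∀ (k k' : Fin 2 × ℕ) (s : ℝ),
      ‖(starRingEnd ℂ) (⟪Φ k, u s⟫_ℂ) * (⟪Φ k', v s⟫_ℂ)‖ ≤ 1 := by
    intro k k' s
    rw [norm_mul, RCLike.norm_conj]
    nlinarith [hA k s, hB k' s, norm_nonneg (⟪Φ k, u s⟫_ℂ), norm_nonneg (⟪Φ k', v s⟫_ℂ)]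
  have hsq1 : (1:ℝ) ≤ Real.sqrt ((m : ℝ) + 2) := by
    rw [show (1:ℝ) = Real.sqrt 1 by simp]
    exact Real.sqrt_le_sqrt (by linarith [Nat.cast_nonneg (α := ℝ) m])
  have hsq1' : (1:ℝ) ≤ Real.sqrt ((m : ℝ) + 3) := by
    rw [show (1:ℝ) = Real.sqrt 1 by simp]
    exact Real.sqrt_le_sqrt (by linarith [Nat.cast_nonneg (α := ℝ) m])
  have hsq2 : Real.sqrt 2 ≤ Real.sqrt ((m : ℝ) + 3) := by
    exact Real.sqrt_le_sqrt (by linarith [Nat.cast_nonneg (α := ℝ) m])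
  -- vanishing outside (1,0)
  have hvan : ∀ k : Fin 2 × ℕ, k ≠ ((1 : Fin 2), 0) → ∀ s : ℝ, ⟪Φ k, v s⟫_ℂ = 0 := by
    rintro ⟨j, n⟩ hne s
    have hini : ∀ k : Fin 2 × ℕ, k ≠ ((1 : Fin 2), 0) → ⟪Φ k, v 0⟫_ℂ = 0 := fun k hk => by
      rw [hv0 k, if_neg hk]
    fin_cases j
    · exact (rwa_vanish_pair Φ lam Δ ω v dB0 dB1 n
        (hini _ (by simp [Prod.ext_iff])) (hini _ (by simp [Prod.ext_iff])) s).1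
    · rcases n with _ | n'
      · exact absurd rfl hne
      · exact (rwa_vanish_pair Φ lam Δ ω v dB0 dB1 n'
          (hini _ (by simp [Prod.ext_iff])) (hini _ (by simp [Prod.ext_iff])) s).2
  set hf : ℝ → ℂ := fun s => (starRingEnd ℂ) (⟪Φ (1, 0), u s⟫_ℂ) * (⟪Φ (1, 0), v s⟫_ℂ)
    with hfdef
  have hinner : ∀ s : ℝ, ⟪u s, v s⟫_ℂ = hf s := by
    intro s
    rw [← Φ.tsum_inner_mul_inner (u s) (v s)]
    rw [tsum_eq_sum (s := {((1 : Fin 2), 0)}) ?_]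
    · rw [Finset.sum_singleton, hfdef]
      rw [← inner_conj_symm (u s) (Φ (1, 0))]
    · intro k hk
      simp only [Finset.mem_singleton] at hk
      rw [hvan k hk s, mul_zero]
  have hfun0 : hf 0 = 1 := by
    rw [hfdef]
    simp only [hu0, hv0]
    simp
  have hns : ∀ s : ℝ, ‖v s - u s‖ ^ 2 = 2 - 2 * (hf s).re := by
    intro s
    have hsq := norm_sub_sq (𝕜 := ℂ) (v s) (u s)
    rw [hvn s, hun s] at hsq
    have h1 : ⟪v s, u s⟫_ℂ = (starRingEnd ℂ) (hf s) := by
      rw [← inner_conj_symm, hinner s]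
    rw [h1] at hsq
    rw [hsq]
    simp [Complex.conj_re]
    ring
  have hh : ∀ s : ℝ, HasDerivAt hf
      ((0:ℂ) * ((fun _ : ℝ => (0:ℂ)) s)
        + Complex.I * (lam : ℂ)
          * ((fun r => (starRingEnd ℂ) (⟪Φ (0, 1), u r⟫_ℂ) * (⟪Φ (1, 0), v r⟫_ℂ)) s)) s := by
    intro s
    have H := (((dA1 0 s).star).mul (dB1 0 s))
    refine H.congr_deriv ?_
    simp only [Complex.star_def, map_mul, map_add, map_neg, Complex.conj_I, Complex.conj_ofReal]
    push_cast
    norm_num [Real.sqrt_zero, Real.sqrt_one]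
    ring
  have hg2 : ∀ s : ℝ, HasDerivAt
      (fun r => (starRingEnd ℂ) (⟪Φ (0, 1), u r⟫_ℂ) * (⟪Φ (1, 0), v r⟫_ℂ))
      (Complex.I * ((2 * ω + Δ : ℝ) : ℂ)
          * ((starRingEnd ℂ) (⟪Φ (0, 1), u s⟫_ℂ) * (⟪Φ (1, 0), v s⟫_ℂ))
        + (Complex.I * (lam : ℂ) * ((Real.sqrt 2 : ℂ) * (starRingEnd ℂ) (⟪Φ (1, 2), u s⟫_ℂ)
              + ((1:ℝ) : ℂ) * (starRingEnd ℂ) (⟪Φ (1, 0), u s⟫_ℂ)) * (⟪Φ (1, 0), v s⟫_ℂ)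
          - Complex.I * (lam : ℂ) * ((0:ℝ) : ℂ)
            * (starRingEnd ℂ) (⟪Φ (1, 0), u s⟫_ℂ) * (⟪Φ (1, 0), v s⟫_ℂ))) s := by
    intro s
    have H := (((dA0 1 s).star).mul (dB1 0 s))
    refine H.congr_deriv ?_
    simp only [Complex.star_def, map_mul, map_add, map_neg, Complex.conj_I, Complex.conj_ofReal]
    push_cast
    norm_num [Real.sqrt_zero, Real.sqrt_one]
    ring
  have hr2b : ∀ s : ℝ,
      ‖Complex.I * (lam : ℂ) * ((Real.sqrt 2 : ℂ) * (starRingEnd ℂ) (⟪Φ (1, 2), u s⟫_ℂ)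
            + ((1:ℝ) : ℂ) * (starRingEnd ℂ) (⟪Φ (1, 0), u s⟫_ℂ)) * (⟪Φ (1, 0), v s⟫_ℂ)
        - Complex.I * (lam : ℂ) * ((0:ℝ) : ℂ)
          * (starRingEnd ℂ) (⟪Φ (1, 0), u s⟫_ℂ) * (⟪Φ (1, 0), v s⟫_ℂ)‖
        ≤ 3 * lam * Real.sqrt ((m : ℝ) + 3) := by
    intro s
    exact rwa_rem_bound hlam' (Real.sqrt_nonneg _) (by norm_num) le_rfl
      hsq2 hsq1' (by positivity)
      (hconjA _ s) (hconjA _ s) (hB _ s) (hconjA _ s) (hB _ s)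
  have Hosc := rwa_osc_aux hμ1 (0:ℂ) (Complex.I * (lam : ℂ))
    0 (3 * lam * Real.sqrt ((m : ℝ) + 3))
    hf (fun _ => 0)
    (fun r => (starRingEnd ℂ) (⟪Φ (0, 1), u r⟫_ℂ) * (⟪Φ (1, 0), v r⟫_ℂ))
    (fun _ => 0)
    (fun s => Complex.I * (lam : ℂ) * ((Real.sqrt 2 : ℂ) * (starRingEnd ℂ) (⟪Φ (1, 2), u s⟫_ℂ)
          + ((1:ℝ) : ℂ) * (starRingEnd ℂ) (⟪Φ (1, 0), u s⟫_ℂ)) * (⟪Φ (1, 0), v s⟫_ℂ)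
        - Complex.I * (lam : ℂ) * ((0:ℝ) : ℂ)
          * (starRingEnd ℂ) (⟪Φ (1, 0), u s⟫_ℂ) * (⟪Φ (1, 0), v s⟫_ℂ))
    hh
    (fun s => by
      have := hasDerivAt_const s (0:ℂ)
      refine this.congr_deriv ?_
      ring)
    hg2
    (fun s => by simp) (fun s => hgb _ _ s)
    (fun s => by simp) hr2b t
  have hd2 : ‖Complex.I * (lam : ℂ)‖ = lam := by
    simp [norm_mul, Complex.norm_I, Complex.norm_real, Real.norm_eq_abs,
      _root_.abs_of_nonneg hlam']
  rw [hfun0, hd2, norm_zero] at Hosc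
  have hD1 : (0:ℝ) ≤ lam * Real.sqrt (m : ℝ) := by positivity
  have hD2' : lam ≤ lam * Real.sqrt ((m : ℝ) + 2) := by nlinarith
  have hK : (0:ℝ) ≤ 3 * lam * Real.sqrt ((m : ℝ) + 3) := by positivity
  have habs : (0:ℝ) ≤ |t| := abs_nonneg t
  calc ‖v t - u t‖ ^ 2 = 2 - 2 * (hf t).re := hns t
    _ = 2 * ((1:ℂ) - hf t).re := by
        simp only [Complex.sub_re, Complex.one_re]; ring
    _ ≤ 2 * ‖(1:ℂ) - hf t‖ := by
        have h := Complex.re_le_norm ((1:ℂ) - hf t)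
        linarith
    _ = 2 * ‖hf t - 1‖ := by rw [norm_sub_rev]
    _ ≤ 2 * ((2 * (0 + lam) + (0 * 0 + lam * (3 * lam * Real.sqrt ((m : ℝ) + 3))) * |t|)
          / (2 * ω + Δ)) := by linarith
    _ ≤ 2 * ((2 * (lam * Real.sqrt (m : ℝ) + lam * Real.sqrt ((m : ℝ) + 2))
          + (lam * Real.sqrt (m : ℝ) + lam * Real.sqrt ((m : ℝ) + 2))
            * (3 * lam * Real.sqrt ((m : ℝ) + 3)) * T) / (2 * ω + Δ)) := by
        gcongr 2 * (?_ / (2 * ω + Δ))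
        nlinarith [mul_le_mul_of_nonneg_left ht (mul_nonneg (le_trans hlam' hD2') hK),
          mul_nonneg (mul_nonneg hD1 hK) hT,
          mul_le_mul_of_nonneg_right hD2' hK,
          mul_le_mul_of_nonneg_right
            (mul_le_mul_of_nonneg_right hD2' hK) habs]
    _ = 2 * (2 * (lam * Real.sqrt (m : ℝ) + lam * Real.sqrt ((m : ℝ) + 2))
          + (lam * Real.sqrt (m : ℝ) + lam * Real.sqrt ((m : ℝ) + 2))
            * (3 * lam * Real.sqrt ((m : ℝ) + 3)) * T) / (2 * ω + Δ) := by
        rw [mul_div_assoc]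

end RwaSing

/-- Validity of the rotating wave approximation in the limit `ω → ∞`: for every
`Ψ ∈ ℂ² ⊗ L²(ℝ)` and every `T > 0`,
`lim_{ω→∞} sup_{|t|≤T} ‖(e^{-itH_RWA} - e^{-itH})Ψ‖ = 0`, with `λ` and `Δ = Ω - ω`
fixed as `ω → ∞`.  For each `ω > 0`, `W₁ ω` and `W₂ ω` are the unitary propagators of
the quantum Rabi Hamiltonian `H = (Ω/2)σ_z⊗I + I⊗ωa†a + λσ_x⊗(a+a†)` and of the
Jaynes–Cummings Hamiltonian `H_RWA = (Ω/2)σ_z⊗I + I⊗ωa†a + λ(σ₊⊗a + σ₋⊗a†)`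
(with `Ω = ω + Δ`), all operators being specified through their matrix elements in the
orthonormal basis `Φ (j, n) = e_j ⊗ φ_n` on the core `ℂ² ⊗ S(ℝ)`. -/
theorem rwa_limit {HH : Type*} [NormedAddCommGroup HH] [InnerProductSpace ℂ HH]
    [CompleteSpace HH]
    (Φ : HilbertBasis (Fin 2 × ℕ) ℂ HH)
    (lam Δ : ℝ) (hlam : 0 < lam)
    (HRabi HRWA : ℝ → HH →ₗ[ℂ] HH)
    (W1 W2 : ℝ → ℝ → HH →L[ℂ] HH)
    (hRa : ∀ ω > (0:ℝ), ∀ Ψ ∈ RapidDecay ⇑Φ, ∀ n : ℕ,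
      ⟪Φ (0, n), HRabi ω Ψ⟫_ℂ
        = (((ω + Δ) / 2 + ω * n : ℝ) : ℂ) * ⟪Φ (0, n), Ψ⟫_ℂ
          + (lam : ℂ) * ((Real.sqrt (n + 1) : ℂ) * ⟪Φ (1, n + 1), Ψ⟫_ℂ
              + (Real.sqrt n : ℂ) * ⟪Φ (1, n - 1), Ψ⟫_ℂ))
    (hRb : ∀ ω > (0:ℝ), ∀ Ψ ∈ RapidDecay ⇑Φ, ∀ n : ℕ,
      ⟪Φ (1, n), HRabi ω Ψ⟫_ℂ
        = ((-(ω + Δ) / 2 + ω * n : ℝ) : ℂ) * ⟪Φ (1, n), Ψ⟫_ℂ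
          + (lam : ℂ) * ((Real.sqrt (n + 1) : ℂ) * ⟪Φ (0, n + 1), Ψ⟫_ℂ
              + (Real.sqrt n : ℂ) * ⟪Φ (0, n - 1), Ψ⟫_ℂ))
    (hWa : ∀ ω > (0:ℝ), ∀ Ψ ∈ RapidDecay ⇑Φ, ∀ n : ℕ,
      ⟪Φ (0, n), HRWA ω Ψ⟫_ℂ
        = (((ω + Δ) / 2 + ω * n : ℝ) : ℂ) * ⟪Φ (0, n), Ψ⟫_ℂ
          + (lam : ℂ) * (Real.sqrt (n + 1) : ℂ) * ⟪Φ (1, n + 1), Ψ⟫_ℂ)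
    (hWb : ∀ ω > (0:ℝ), ∀ Ψ ∈ RapidDecay ⇑Φ, ∀ n : ℕ,
      ⟪Φ (1, n), HRWA ω Ψ⟫_ℂ
        = ((-(ω + Δ) / 2 + ω * n : ℝ) : ℂ) * ⟪Φ (1, n), Ψ⟫_ℂ
          + (lam : ℂ) * (Real.sqrt n : ℂ) * ⟪Φ (0, n - 1), Ψ⟫_ℂ)
    (hW10 : ∀ ω > (0:ℝ), W1 ω 0 = 1) (hW20 : ∀ ω > (0:ℝ), W2 ω 0 = 1)
    (hW1unit : ∀ ω > (0:ℝ), ∀ t : ℝ, ∀ x y : HH, ⟪W1 ω t x, W1 ω t y⟫_ℂ = ⟪x, y⟫_ℂ)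
    (hW2unit : ∀ ω > (0:ℝ), ∀ t : ℝ, ∀ x y : HH, ⟪W2 ω t x, W2 ω t y⟫_ℂ = ⟪x, y⟫_ℂ)
    (hW1surj : ∀ ω > (0:ℝ), ∀ t : ℝ, Function.Surjective (W1 ω t))
    (hW2surj : ∀ ω > (0:ℝ), ∀ t : ℝ, Function.Surjective (W2 ω t))
    (hinv1 : ∀ ω > (0:ℝ), ∀ t : ℝ, ∀ Ψ ∈ RapidDecay ⇑Φ, W1 ω t Ψ ∈ RapidDecay ⇑Φ)
    (hinv2 : ∀ ω > (0:ℝ), ∀ t : ℝ, ∀ Ψ ∈ RapidDecay ⇑Φ, W2 ω t Ψ ∈ RapidDecay ⇑Φ)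
    (hode1 : ∀ ω > (0:ℝ), ∀ Ψ ∈ RapidDecay ⇑Φ, ∀ t : ℝ,
      HasDerivAt (fun s => W1 ω s Ψ) ((-Complex.I) • HRabi ω (W1 ω t Ψ)) t)
    (hode2 : ∀ ω > (0:ℝ), ∀ Ψ ∈ RapidDecay ⇑Φ, ∀ t : ℝ,
      HasDerivAt (fun s => W2 ω s Ψ) ((-Complex.I) • HRWA ω (W2 ω t Ψ)) t) :
    ∀ Ψ : HH, ∀ T > (0:ℝ), ∀ ε > (0:ℝ), ∃ ω₀ : ℝ, 0 < ω₀ ∧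
      ∀ ω ≥ ω₀, ∀ t : ℝ, |t| ≤ T → ‖W2 ω t Ψ - W1 ω t Ψ‖ < ε := by
  intro Ψ T hT ε hε
  have hΦi : ∀ k l : Fin 2 × ℕ, ⟪Φ k, Φ l⟫_ℂ = if k = l then 1 else 0 :=
    orthonormal_iff_ite.mp Φ.orthonormal
  have hΦn : ∀ k, ‖Φ k‖ = 1 := fun k => Φ.orthonormal.1 k
  have hRD : ∀ k0 : Fin 2 × ℕ, Φ k0 ∈ RapidDecay ⇑Φ := by
    intro k0 k
    refine ⟨((k0.2 : ℝ)) ^ k, ?_⟩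
    intro j n
    rw [hΦi]
    by_cases hkk : ((j, n) : Fin 2 × ℕ) = k0
    · rw [if_pos hkk, ← hkk]
      simp
    · rw [if_neg hkk]
      simp only [norm_zero, zero_mul]
      positivity
  have hn1 : ∀ ω > (0:ℝ), ∀ (t : ℝ) (x : HH), ‖W1 ω t x‖ = ‖x‖ := by
    intro ω hω t x
    have h2 : ‖W1 ω t x‖ ^ 2 = ‖x‖ ^ 2 := by
      rw [← inner_self_eq_norm_sq (𝕜 := ℂ), ← inner_self_eq_norm_sq (𝕜 := ℂ), hW1unit ω hω]
    nlinarith [norm_nonneg (W1 ω t x), norm_nonneg x]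
  have hn2 : ∀ ω > (0:ℝ), ∀ (t : ℝ) (x : HH), ‖W2 ω t x‖ = ‖x‖ := by
    intro ω hω t x
    have h2 : ‖W2 ω t x‖ ^ 2 = ‖x‖ ^ 2 := by
      rw [← inner_self_eq_norm_sq (𝕜 := ℂ), ← inner_self_eq_norm_sq (𝕜 := ℂ), hW2unit ω hω]
    nlinarith [norm_nonneg (W2 ω t x), norm_nonneg x]
  -- the key single-basis-vector estimate
  have key : ∀ (k0 : Fin 2 × ℕ), ∀ δ > (0:ℝ), ∃ ω₀ : ℝ, 1 ≤ ω₀ ∧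
      ∀ ω ≥ ω₀, ∀ t : ℝ, |t| ≤ T → ‖W2 ω t (Φ k0) - W1 ω t (Φ k0)‖ < δ := by
    intro k0 δ hδ
    obtain ⟨m, hm⟩ : ∃ m : ℕ, k0 = ((0 : Fin 2), m) ∨ k0 = ((1 : Fin 2), m + 1) ∨
        k0 = ((1 : Fin 2), 0) := by
      rcases k0 with ⟨j, n⟩
      fin_cases j
      · exact ⟨n, Or.inl rfl⟩
      · rcases n with _ | n'
        · exact ⟨0, Or.inr (Or.inr rfl)⟩
        · exact ⟨n', Or.inr (Or.inl rfl)⟩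
    set C : ℝ := 2 * (2 * (lam * Real.sqrt (m : ℝ) + lam * Real.sqrt ((m : ℝ) + 2))
        + (lam * Real.sqrt (m : ℝ) + lam * Real.sqrt ((m : ℝ) + 2))
          * (3 * lam * Real.sqrt ((m : ℝ) + 3)) * T) with hC
    have hC0 : 0 ≤ C := by
      rw [hC]; positivity
    refine ⟨max (|Δ| + 1) (C / δ ^ 2 + 1),
      le_trans (by linarith [abs_nonneg Δ] : (1:ℝ) ≤ |Δ| + 1) (le_max_left _ _), ?_⟩
    intro ω hω t ht
    have hωΔ : |Δ| + 1 ≤ ω := le_trans (le_max_left _ _) hω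
    have hω1 : (1:ℝ) ≤ ω := by linarith [abs_nonneg Δ]
    have hω0 : (0:ℝ) < ω := by linarith
    have hωC : C / δ ^ 2 + 1 ≤ ω := le_trans (le_max_right _ _) hω
    have hμ1 : (1:ℝ) ≤ 2 * ω + Δ := by linarith [neg_abs_le Δ]
    have hμω : ω ≤ 2 * ω + Δ := by linarith [neg_abs_le Δ]
    have hΨ0 : Φ k0 ∈ RapidDecay ⇑Φ := hRD k0
    have hA : ∀ (k : Fin 2 × ℕ) (s : ℝ), ‖(⟪Φ k, W1 ω s (Φ k0)⟫_ℂ)‖ ≤ 1 := by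
      intro k s
      calc ‖(⟪Φ k, W1 ω s (Φ k0)⟫_ℂ)‖ ≤ ‖Φ k‖ * ‖W1 ω s (Φ k0)‖ := norm_inner_le_norm _ _
        _ = 1 := by rw [hΦn, hn1 ω hω0, hΦn, one_mul]
    have hB : ∀ (k : Fin 2 × ℕ) (s : ℝ), ‖(⟪Φ k, W2 ω s (Φ k0)⟫_ℂ)‖ ≤ 1 := by
      intro k s
      calc ‖(⟪Φ k, W2 ω s (Φ k0)⟫_ℂ)‖ ≤ ‖Φ k‖ * ‖W2 ω s (Φ k0)‖ := norm_inner_le_norm _ _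
        _ = 1 := by rw [hΦn, hn2 ω hω0, hΦn, one_mul]
    have hun : ∀ s : ℝ, ‖W1 ω s (Φ k0)‖ = 1 := fun s => by rw [hn1 ω hω0, hΦn]
    have hvn : ∀ s : ℝ, ‖W2 ω s (Φ k0)‖ = 1 := fun s => by rw [hn2 ω hω0, hΦn]
    have dA0 : ∀ (n : ℕ) (s : ℝ), HasDerivAt (fun r => ⟪Φ (0, n), W1 ω r (Φ k0)⟫_ℂ)
        (-Complex.I * ((((ω + Δ) / 2 + ω * n : ℝ) : ℂ) * ⟪Φ (0, n), W1 ω s (Φ k0)⟫_ℂ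
          + (lam : ℂ) * ((Real.sqrt (n + 1) : ℂ) * ⟪Φ (1, n + 1), W1 ω s (Φ k0)⟫_ℂ
              + (Real.sqrt n : ℂ) * ⟪Φ (1, n - 1), W1 ω s (Φ k0)⟫_ℂ))) s := by
      intro n s
      have h := rwa_dcoef (Φ (0, n)) (HRabi ω) (fun r => W1 ω r (Φ k0)) s
        (hode1 ω hω0 (Φ k0) hΨ0 s)
      rwa [hRa ω hω0 _ (hinv1 ω hω0 s (Φ k0) hΨ0) n] at h
    have dA1 : ∀ (n : ℕ) (s : ℝ), HasDerivAt (fun r => ⟪Φ (1, n), W1 ω r (Φ k0)⟫_ℂ)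
        (-Complex.I * (((-(ω + Δ) / 2 + ω * n : ℝ) : ℂ) * ⟪Φ (1, n), W1 ω s (Φ k0)⟫_ℂ
          + (lam : ℂ) * ((Real.sqrt (n + 1) : ℂ) * ⟪Φ (0, n + 1), W1 ω s (Φ k0)⟫_ℂ
              + (Real.sqrt n : ℂ) * ⟪Φ (0, n - 1), W1 ω s (Φ k0)⟫_ℂ))) s := by
      intro n s
      have h := rwa_dcoef (Φ (1, n)) (HRabi ω) (fun r => W1 ω r (Φ k0)) s
        (hode1 ω hω0 (Φ k0) hΨ0 s)
      rwa [hRb ω hω0 _ (hinv1 ω hω0 s (Φ k0) hΨ0) n] at h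
    have dB0 : ∀ (n : ℕ) (s : ℝ), HasDerivAt (fun r => ⟪Φ (0, n), W2 ω r (Φ k0)⟫_ℂ)
        (-Complex.I * ((((ω + Δ) / 2 + ω * n : ℝ) : ℂ) * ⟪Φ (0, n), W2 ω s (Φ k0)⟫_ℂ
          + (lam : ℂ) * (Real.sqrt (n + 1) : ℂ) * ⟪Φ (1, n + 1), W2 ω s (Φ k0)⟫_ℂ)) s := by
      intro n s
      have h := rwa_dcoef (Φ (0, n)) (HRWA ω) (fun r => W2 ω r (Φ k0)) s
        (hode2 ω hω0 (Φ k0) hΨ0 s)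
      rwa [hWa ω hω0 _ (hinv2 ω hω0 s (Φ k0) hΨ0) n] at h
    have dB1 : ∀ (n : ℕ) (s : ℝ), HasDerivAt (fun r => ⟪Φ (1, n), W2 ω r (Φ k0)⟫_ℂ)
        (-Complex.I * (((-(ω + Δ) / 2 + ω * n : ℝ) : ℂ) * ⟪Φ (1, n), W2 ω s (Φ k0)⟫_ℂ
          + (lam : ℂ) * (Real.sqrt n : ℂ) * ⟪Φ (0, n - 1), W2 ω s (Φ k0)⟫_ℂ)) s := by
      intro n s
      have h := rwa_dcoef (Φ (1, n)) (HRWA ω) (fun r => W2 ω r (Φ k0)) s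
        (hode2 ω hω0 (Φ k0) hΨ0 s)
      rwa [hWb ω hω0 _ (hinv2 ω hω0 s (Φ k0) hΨ0) n] at h
    have hu0 : ∀ k, ⟪Φ k, W1 ω 0 (Φ k0)⟫_ℂ = if k = k0 then 1 else 0 := by
      intro k
      rw [hW10 ω hω0]
      simp [hΦi]
    have hv0 : ∀ k, ⟪Φ k, W2 ω 0 (Φ k0)⟫_ℂ = if k = k0 then 1 else 0 := by
      intro k
      rw [hW20 ω hω0]
      simp [hΦi]
    have hest : ‖W2 ω t (Φ k0) - W1 ω t (Φ k0)‖ ^ 2 ≤ C / (2 * ω + Δ) := by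
      rw [hC]
      rcases hm with h | h | h
      · exact rwa_pair_est Φ lam Δ ω _ _ hlam hω0 hμ1 hA hB hun hvn dA0 dA1 dB0 dB1
          k0 m hu0 hv0 (Or.inl h) T t hT.le ht
      · exact rwa_pair_est Φ lam Δ ω _ _ hlam hω0 hμ1 hA hB hun hvn dA0 dA1 dB0 dB1
          k0 m hu0 hv0 (Or.inr h) T t hT.le ht
      · exact rwa_sing_est Φ lam Δ ω _ _ hlam hω0 hμ1 hA hB hun hvn dA0 dA1 dB0 dB1
          k0 m hu0 hv0 h T t hT.le ht
    have h1 : C / (2 * ω + Δ) ≤ C / ω := by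
      gcongr
    have h2 : C / ω < δ ^ 2 := by
      rw [div_lt_iff₀ hω0]
      have h3 : δ ^ 2 * (C / δ ^ 2 + 1) = C + δ ^ 2 := by
        field_simp
      nlinarith [mul_le_mul_of_nonneg_left hωC (sq_nonneg δ), sq_nonneg δ, hδ]
    have h4 : ‖W2 ω t (Φ k0) - W1 ω t (Φ k0)‖ ^ 2 < δ ^ 2 := by linarith
    nlinarith [norm_nonneg (W2 ω t (Φ k0) - W1 ω t (Φ k0)), hδ]
  -- density argument
  have hd : Dense (↑(Submodule.span ℂ (Set.range ⇑Φ)) : Set HH) := by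
    rw [Submodule.dense_iff_topologicalClosure_eq_top]
    exact Φ.dense_span
  obtain ⟨y, hy, hxy⟩ := hd.exists_dist_lt Ψ (show (0:ℝ) < ε / 4 by linarith)
  rw [dist_eq_norm] at hxy
  obtain ⟨c, hc⟩ := (Finsupp.mem_span_range_iff_exists_finsupp).mp hy
  set S : ℝ := ∑ k ∈ c.support, ‖c k‖ with hS
  have hS0 : 0 ≤ S := Finset.sum_nonneg fun k _ => norm_nonneg _
  have hδ' : (0:ℝ) < ε / (2 * (S + 1)) := by positivity
  choose w hw1 hw2 using fun k : Fin 2 × ℕ => key k (ε / (2 * (S + 1))) hδ'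
  have hwsum : (0:ℝ) ≤ ∑ k ∈ c.support, w k :=
    Finset.sum_nonneg fun k _ => le_trans zero_le_one (hw1 k)
  refine ⟨1 + ∑ k ∈ c.support, w k, by linarith, ?_⟩
  intro ω hω t ht
  have hωk : ∀ k ∈ c.support, w k ≤ ω := by
    intro k hk
    have h1 : w k ≤ ∑ j ∈ c.support, w j :=
      Finset.single_le_sum (fun j _ => le_trans zero_le_one (hw1 j)) hk
    linarith
  have hω0 : (0:ℝ) < ω := by linarith
  have hyfin : W2 ω t y - W1 ω t y
      = ∑ k ∈ c.support, c k • (W2 ω t (Φ k) - W1 ω t (Φ k)) := by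
    have e2 : W2 ω t y = ∑ k ∈ c.support, c k • W2 ω t (Φ k) := by
      rw [← hc, Finsupp.sum, map_sum]
      exact Finset.sum_congr rfl fun k _ => by rw [map_smul]
    have e1 : W1 ω t y = ∑ k ∈ c.support, c k • W1 ω t (Φ k) := by
      rw [← hc, Finsupp.sum, map_sum]
      exact Finset.sum_congr rfl fun k _ => by rw [map_smul]
    rw [e1, e2, ← Finset.sum_sub_distrib]
    exact Finset.sum_congr rfl fun k _ => (smul_sub _ _ _).symm
  have hymid : ‖W2 ω t y - W1 ω t y‖ ≤ S * (ε / (2 * (S + 1))) := by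
    rw [hyfin]
    calc ‖∑ k ∈ c.support, c k • (W2 ω t (Φ k) - W1 ω t (Φ k))‖
        ≤ ∑ k ∈ c.support, ‖c k • (W2 ω t (Φ k) - W1 ω t (Φ k))‖ := norm_sum_le _ _
      _ ≤ ∑ k ∈ c.support, ‖c k‖ * (ε / (2 * (S + 1))) := by
          apply Finset.sum_le_sum
          intro k hk
          rw [norm_smul]
          exact mul_le_mul_of_nonneg_left (hw2 k ω (hωk k hk) t ht).le (norm_nonneg _)
      _ = S * (ε / (2 * (S + 1))) := by rw [← Finset.sum_mul]
  have hmid2 : S * (ε / (2 * (S + 1))) < ε / 2 := by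
    have hkey : ε = (ε / (2 * (S + 1))) * (2 * (S + 1)) := by field_simp
    nlinarith [hδ', hS0]
  calc ‖W2 ω t Ψ - W1 ω t Ψ‖
      = ‖W2 ω t (Ψ - y) + (W2 ω t y - W1 ω t y) + W1 ω t (y - Ψ)‖ := by
        rw [map_sub, map_sub]; congr 1; abel
    _ ≤ ‖W2 ω t (Ψ - y)‖ + ‖W2 ω t y - W1 ω t y‖ + ‖W1 ω t (y - Ψ)‖ := norm_add₃_le
    _ = ‖Ψ - y‖ + ‖W2 ω t y - W1 ω t y‖ + ‖Ψ - y‖ := by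
        rw [hn1 ω hω0, hn2 ω hω0, norm_sub_rev y Ψ]
    _ < ε := by linarith
end
end

section
/- For Fock states Φ_{j,n} = e_j ⊗ φ_n with n ≥ 1, in the resonant case Δ = 0 and with g = λ/ω, sup_{t∈[0,π/ω]} ‖(U₂(t) - U₁(t))Φ_{j,n}‖ ≤ 5g√(n+3), assuming 0 < g. -/
open scoped InnerProductSpace
open Real

noncomputable section

section Aux

set_option linter.unusedSectionVars false

variable {HH : Type*} [NormedAddCommGroup HH] [InnerProductSpace ℂ HH] [CompleteSpace HH]

/-- rotation coefficient -/
def cA (Ω : ℝ) (α₀ β₀ : ℂ) (s : ℝ) : ℂ :=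
  (Real.cos (Ω * s) : ℂ) * α₀ - Complex.I * (Real.sin (Ω * s) : ℂ) * β₀

lemma cA_hasDerivAt (Ω : ℝ) (α₀ β₀ : ℂ) (s : ℝ) :
    HasDerivAt (cA Ω α₀ β₀) (-(Complex.I * Ω) * cA Ω β₀ α₀ s) s := by
  have h1 : HasDerivAt (fun u : ℝ => Ω * u) Ω s := by
    simpa using (hasDerivAt_id s).const_mul Ω
  have hcos : HasDerivAt (fun u : ℝ => ((Real.cos (Ω * u) : ℝ) : ℂ))
      ((-Real.sin (Ω * s) * Ω : ℝ) : ℂ) s :=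
    (((Real.hasDerivAt_cos (Ω * s)).comp s h1)).ofReal_comp
  have hsin : HasDerivAt (fun u : ℝ => ((Real.sin (Ω * u) : ℝ) : ℂ))
      ((Real.cos (Ω * s) * Ω : ℝ) : ℂ) s :=
    (((Real.hasDerivAt_sin (Ω * s)).comp s h1)).ofReal_comp
  have h := (hcos.mul_const α₀).sub ((hsin.const_mul Complex.I).mul_const β₀)
  convert h using 1
  · rfl
  · rfl
  simp only [cA, Complex.ofReal_mul, Complex.ofReal_neg]
  linear_combination ((Ω : ℂ) * ((Real.sin (Ω * s) : ℝ) : ℂ) * α₀) * Complex.I_sq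

lemma cA_norm_le (Ω : ℝ) (α₀ β₀ : ℂ)
    (h : (α₀ = 1 ∧ β₀ = 0) ∨ (α₀ = 0 ∧ β₀ = 1)) (s : ℝ) : ‖cA Ω α₀ β₀ s‖ ≤ 1 := by
  rcases h with ⟨h1, h2⟩ | ⟨h1, h2⟩ <;> subst h1 <;> subst h2
  · have e : cA Ω 1 0 s = ((Real.cos (Ω * s) : ℝ) : ℂ) := by
      simp only [cA, mul_one, mul_zero, sub_zero]
    rw [e, Complex.norm_real, Real.norm_eq_abs]
    exact abs_cos_le_one _
  · have e : cA Ω 0 1 s = -(Complex.I * ((Real.sin (Ω * s) : ℝ) : ℂ)) := by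
      simp only [cA, mul_one, mul_zero, zero_sub]
    rw [e, norm_neg, norm_mul, Complex.norm_I, one_mul, Complex.norm_real, Real.norm_eq_abs]
    exact abs_sin_le_one _

lemma abs_cos_add_abs_sin_le (θ : ℝ) : |Real.cos θ| + |Real.sin θ| ≤ Real.sqrt 2 := by
  have h1 := Real.sin_sq_add_cos_sq θ
  have h2 : (|Real.cos θ| + |Real.sin θ|) ^ 2 ≤ 2 := by
    have := sq_nonneg (|Real.cos θ| - |Real.sin θ|)
    nlinarith [sq_abs (Real.cos θ), sq_abs (Real.sin θ)]
  have h3 : (0:ℝ) ≤ |Real.cos θ| + |Real.sin θ| := by positivity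
  nlinarith [Real.sq_sqrt (by norm_num : (2:ℝ) ≥ 0), Real.sqrt_nonneg 2]

lemma cA_sum_norm (Ω : ℝ) (α₀ β₀ : ℂ)
    (h : (α₀ = 1 ∧ β₀ = 0) ∨ (α₀ = 0 ∧ β₀ = 1)) (s : ℝ) :
    ‖cA Ω α₀ β₀ s‖ + ‖cA Ω β₀ α₀ s‖ ≤ Real.sqrt 2 := by
  have e1 : cA Ω 1 0 s = ((Real.cos (Ω * s) : ℝ) : ℂ) := by
    simp only [cA, mul_one, mul_zero, sub_zero]
  have e2 : cA Ω 0 1 s = -(Complex.I * ((Real.sin (Ω * s) : ℝ) : ℂ)) := by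
    simp only [cA, mul_one, mul_zero, zero_sub]
  have n1 : ‖cA Ω 1 0 s‖ = |Real.cos (Ω * s)| := by
    rw [e1, Complex.norm_real, Real.norm_eq_abs]
  have n2 : ‖cA Ω 0 1 s‖ = |Real.sin (Ω * s)| := by
    rw [e2, norm_neg, norm_mul, Complex.norm_I, one_mul, Complex.norm_real, Real.norm_eq_abs]
  rcases h with ⟨h1, h2⟩ | ⟨h1, h2⟩ <;> subst h1 <;> subst h2
  · rw [n1, n2]; exact abs_cos_add_abs_sin_le (Ω * s)
  · rw [n1, n2, add_comm]; exact abs_cos_add_abs_sin_le (Ω * s)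

lemma cA_conj_sum (Ω : ℝ) (α₀ β₀ : ℂ)
    (h : (α₀ = 1 ∧ β₀ = 0) ∨ (α₀ = 0 ∧ β₀ = 1)) (s : ℝ) :
    (starRingEnd ℂ) (cA Ω α₀ β₀ s) * cA Ω α₀ β₀ s
      + (starRingEnd ℂ) (cA Ω β₀ α₀ s) * cA Ω β₀ α₀ s = 1 := by
  have hh : ((Real.sin (Ω*s) : ℂ))^2 + ((Real.cos (Ω*s)):ℂ)^2 = 1 := by
    exact_mod_cast congrArg (Complex.ofReal) (Real.sin_sq_add_cos_sq (Ω*s))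
  rcases h with ⟨h1, h2⟩ | ⟨h1, h2⟩ <;> subst h1 <;> subst h2 <;>
    simp only [cA, mul_one, mul_zero, zero_mul, sub_zero, zero_sub, map_neg, map_mul,
      Complex.conj_I, Complex.conj_ofReal] <;>
    linear_combination hh - (((Real.sin (Ω * s) : ℝ) : ℂ)) ^ 2 * Complex.I_sq

lemma span_subset_rapidDecay (Φ : HilbertBasis (Fin 2 × ℕ) ℂ HH) :
    ∀ Ψ ∈ Submodule.span ℂ (Set.range ⇑Φ), Ψ ∈ RapidDecay ⇑Φ := by
  intro Ψ hΨ
  induction hΨ using Submodule.span_induction with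
  | mem x hx =>
      obtain ⟨i, rfl⟩ := hx
      intro k
      refine ⟨(i.2 : ℝ) ^ k, fun j m => ?_⟩
      rw [orthonormal_iff_ite.mp Φ.orthonormal]
      by_cases h : (j, m) = i
      · cases h; simp
      · simp [h]
  | zero =>
      intro k; exact ⟨0, fun j m => by simp⟩
  | add x y hx hy ihx ihy =>
      intro k
      obtain ⟨C1, h1⟩ := ihx k
      obtain ⟨C2, h2⟩ := ihy k
      refine ⟨C1 + C2, fun j m => ?_⟩
      rw [inner_add_right]
      calc ‖⟪Φ (j, m), x⟫_ℂ + ⟪Φ (j, m), y⟫_ℂ‖ * (m : ℝ) ^ k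
          ≤ (‖⟪Φ (j, m), x⟫_ℂ‖ + ‖⟪Φ (j, m), y⟫_ℂ‖) * (m : ℝ) ^ k := by
            gcongr; exact norm_add_le _ _
        _ = ‖⟪Φ (j, m), x⟫_ℂ‖ * (m : ℝ) ^ k + ‖⟪Φ (j, m), y⟫_ℂ‖ * (m : ℝ) ^ k := by ring
        _ ≤ C1 + C2 := add_le_add (h1 j m) (h2 j m)
  | smul c x hx ih =>
      intro k
      obtain ⟨C, hC⟩ := ih k
      have hC0 : 0 ≤ C := le_trans (by positivity) (hC 0 0)
      refine ⟨‖c‖ * C, fun j m => ?_⟩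
      rw [inner_smul_right]
      calc ‖c * ⟪Φ (j, m), x⟫_ℂ‖ * (m : ℝ) ^ k
          = ‖c‖ * (‖⟪Φ (j, m), x⟫_ℂ‖ * (m : ℝ) ^ k) := by
            rw [norm_mul]; ring
        _ ≤ ‖c‖ * C := by gcongr; exact hC j m

lemma iso_of_unit (U : HH →L[ℂ] HH) (hU : ∀ x y : HH, ⟪U x, U y⟫_ℂ = ⟪x, y⟫_ℂ) (v : HH) :
    ‖U v‖ = ‖v‖ := by
  rw [@norm_eq_sqrt_re_inner ℂ, @norm_eq_sqrt_re_inner ℂ, hU]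

lemma norm_le_of_dense_bound (Φ : HilbertBasis (Fin 2 × ℕ) ℂ HH)
    (U : HH →L[ℂ] HH) (hU : ∀ x y : HH, ⟪U x, U y⟫_ℂ = ⟪x, y⟫_ℂ)
    (hsurj : Function.Surjective U) (y : HH) (K : ℝ) (hK : 0 ≤ K)
    (h : ∀ x ∈ Submodule.span ℂ (Set.range ⇑Φ), ‖⟪U x, y⟫_ℂ‖ ≤ K * ‖x‖) :
    ‖y‖ ≤ K := by
  have hiso := iso_of_unit U hU
  obtain ⟨w, hw⟩ := hsurj y
  have hwn : ‖w‖ = ‖y‖ := by rw [← hw, hiso]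
  have hdense : Dense (↑(Submodule.span ℂ (Set.range ⇑Φ)) : Set HH) := by
    rw [Submodule.dense_iff_topologicalClosure_eq_top]
    exact Φ.dense_span
  have key : ∀ δ : ℝ, 0 < δ → ‖y‖ ^ 2 ≤ K * ‖y‖ + δ * (K + ‖y‖) := by
    intro δ hδ
    obtain ⟨x, hxs, hxw⟩ : ∃ x ∈ (↑(Submodule.span ℂ (Set.range ⇑Φ)) : Set HH),
        dist w x < δ := by
      have := Metric.mem_closure_iff.mp (hdense w) δ hδ
      simpa [and_comm] using this
    have hd : ‖w - x‖ < δ := by rwa [← dist_eq_norm]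
    have h1 : ‖⟪U w, y⟫_ℂ - ⟪U x, y⟫_ℂ‖ ≤ δ * ‖y‖ := by
      rw [← inner_sub_left, ← map_sub]
      calc ‖⟪U (w - x), y⟫_ℂ‖ ≤ ‖U (w - x)‖ * ‖y‖ := norm_inner_le_norm _ _
        _ = ‖w - x‖ * ‖y‖ := by rw [hiso]
        _ ≤ δ * ‖y‖ := by gcongr
    have h2 : ‖⟪U w, y⟫_ℂ‖ = ‖y‖ ^ 2 := by
      rw [hw, @inner_self_eq_norm_sq_to_K ℂ]
      simp
    have h3 : ‖⟪U x, y⟫_ℂ‖ ≤ K * ‖x‖ := h x hxs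
    have h4 : ‖x‖ ≤ ‖y‖ + δ := by
      calc ‖x‖ ≤ ‖w‖ + ‖x - w‖ := by
            have := norm_add_le w (x - w); simpa using this
        _ ≤ ‖y‖ + δ := by
            rw [hwn]; gcongr; rw [norm_sub_rev]; exact hd.le
    calc ‖y‖ ^ 2 = ‖⟪U w, y⟫_ℂ‖ := h2.symm
      _ ≤ ‖⟪U x, y⟫_ℂ‖ + ‖⟪U w, y⟫_ℂ - ⟪U x, y⟫_ℂ‖ := by
          have := norm_add_le (⟪U x, y⟫_ℂ) (⟪U w, y⟫_ℂ - ⟪U x, y⟫_ℂ); simpa using this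
      _ ≤ K * ‖x‖ + δ * ‖y‖ := add_le_add h3 h1
      _ ≤ K * (‖y‖ + δ) + δ * ‖y‖ := by gcongr
      _ = K * ‖y‖ + δ * (K + ‖y‖) := by ring
  have hsq : ‖y‖ ^ 2 ≤ K * ‖y‖ := by
    by_contra hc
    push_neg at hc
    set ε := ‖y‖ ^ 2 - K * ‖y‖ with hε
    have hε0 : 0 < ε := by simpa [hε] using sub_pos.mpr hc
    have hδ0 : 0 < ε / (K + ‖y‖ + 1) := by positivity
    have := key (ε / (K + ‖y‖ + 1)) hδ0
    have hlt : ε / (K + ‖y‖ + 1) * (K + ‖y‖) < ε := by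
      rw [div_mul_eq_mul_div, div_lt_iff₀ (by positivity)]
      nlinarith [norm_nonneg y]
    nlinarith
  by_contra hc
  push_neg at hc
  have hy0 : 0 < ‖y‖ := lt_of_le_of_lt hK hc
  nlinarith

lemma key_bound (Φ : HilbertBasis (Fin 2 × ℕ) ℂ HH)
    (lam ω : ℝ) (hlam : 0 ≤ lam)
    (H1 : ℝ → HH →ₗ[ℂ] HH) (H2 : HH →ₗ[ℂ] HH)
    (U1 U2 : ℝ → HH →L[ℂ] HH)
    (hH1a : ∀ Ψ ∈ RapidDecay ⇑Φ, ∀ s : ℝ, ∀ m : ℕ,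
      ⟪Φ (0, m), H1 s Ψ⟫_ℂ
        = (lam : ℂ) * ((Real.sqrt (m + 1) : ℂ) * ⟪Φ (1, m + 1), Ψ⟫_ℂ
            + Complex.exp (2 * Complex.I * s * ω) * (Real.sqrt m : ℂ)
                * ⟪Φ (1, m - 1), Ψ⟫_ℂ))
    (hH1b : ∀ Ψ ∈ RapidDecay ⇑Φ, ∀ s : ℝ, ∀ m : ℕ,
      ⟪Φ (1, m), H1 s Ψ⟫_ℂ
        = (lam : ℂ) * ((Real.sqrt m : ℂ) * ⟪Φ (0, m - 1), Ψ⟫_ℂ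
            + Complex.exp (-(2 * Complex.I * s * ω)) * (Real.sqrt (m + 1) : ℂ)
                * ⟪Φ (0, m + 1), Ψ⟫_ℂ))
    (hH2a : ∀ Ψ ∈ RapidDecay ⇑Φ, ∀ m : ℕ,
      ⟪Φ (0, m), H2 Ψ⟫_ℂ = (lam : ℂ) * (Real.sqrt (m + 1) : ℂ) * ⟪Φ (1, m + 1), Ψ⟫_ℂ)
    (hH2b : ∀ Ψ ∈ RapidDecay ⇑Φ, ∀ m : ℕ,
      ⟪Φ (1, m), H2 Ψ⟫_ℂ = (lam : ℂ) * (Real.sqrt m : ℂ) * ⟪Φ (0, m - 1), Ψ⟫_ℂ)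
    (hU10 : U1 0 = 1) (hU20 : U2 0 = 1)
    (hU1unit : ∀ t : ℝ, ∀ x y : HH, ⟪U1 t x, U1 t y⟫_ℂ = ⟪x, y⟫_ℂ)
    (hU2unit : ∀ t : ℝ, ∀ x y : HH, ⟪U2 t x, U2 t y⟫_ℂ = ⟪x, y⟫_ℂ)
    (hU1surj : ∀ t : ℝ, Function.Surjective (U1 t))
    (hinv1 : ∀ t : ℝ, ∀ Ψ ∈ RapidDecay ⇑Φ, U1 t Ψ ∈ RapidDecay ⇑Φ)
    (hinv2 : ∀ t : ℝ, ∀ Ψ ∈ RapidDecay ⇑Φ, U2 t Ψ ∈ RapidDecay ⇑Φ)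
    (hode1 : ∀ Ψ ∈ RapidDecay ⇑Φ, ∀ t : ℝ,
      HasDerivAt (fun s => U1 s Ψ) ((-Complex.I) • H1 t (U1 t Ψ)) t)
    (hode2 : ∀ Ψ ∈ RapidDecay ⇑Φ, ∀ t : ℝ,
      HasDerivAt (fun s => U2 s Ψ) ((-Complex.I) • H2 (U2 t Ψ)) t)
    (m : ℕ) (α₀ β₀ : ℂ) (hcase : (α₀ = 1 ∧ β₀ = 0) ∨ (α₀ = 0 ∧ β₀ = 1))
    (p : Fin 2 × ℕ) (hp : Φ p = α₀ • Φ (0, m) + β₀ • Φ (1, m + 1))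
    (t : ℝ) (ht0 : 0 ≤ t) :
    ‖U2 t (Φ p) - U1 t (Φ p)‖ ≤ Real.sqrt 2 * lam * t * Real.sqrt ((m : ℝ) + 2) := by
  have hite := orthonormal_iff_ite.mp Φ.orthonormal
  set Ω : ℝ := lam * Real.sqrt ((m : ℝ) + 1) with hΩ
  set V : ℝ → HH := fun s => cA Ω α₀ β₀ s • Φ (0, m) + cA Ω β₀ α₀ s • Φ (1, m + 1)
    with hVdef
  have hpRD : Φ p ∈ RapidDecay ⇑Φ :=
    span_subset_rapidDecay Φ _ (Submodule.subset_span ⟨p, rfl⟩)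
  have hV : ∀ s : ℝ, HasDerivAt V
      ((-(Complex.I * Ω) * cA Ω β₀ α₀ s) • Φ (0, m)
        + (-(Complex.I * Ω) * cA Ω α₀ β₀ s) • Φ (1, m + 1)) s := fun s =>
    ((cA_hasDerivAt Ω α₀ β₀ s).smul_const _).add ((cA_hasDerivAt Ω β₀ α₀ s).smul_const _)
  have hcast : ((Ω : ℝ) : ℂ) = (lam : ℂ) * ((Real.sqrt ((m : ℝ) + 1) : ℝ) : ℂ) := by
    rw [hΩ]; push_cast; ring
  have hV0 : V 0 = Φ p := by
    have c1 : cA Ω α₀ β₀ 0 = α₀ := by simp [cA]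
    have c2 : cA Ω β₀ α₀ 0 = β₀ := by simp [cA]
    rw [hVdef]; simp only; rw [c1, c2, ← hp]
  -- Stage 1: U2 s (Φ p) = V s
  have hG : ∀ s : ℝ, HasDerivAt (fun u => ⟪U2 u (Φ p), V u⟫_ℂ) 0 s := by
    intro s
    have h := HasDerivAt.inner ℂ (hode2 (Φ p) hpRD s) (hV s)
    convert h using 1
    · rfl
    have haRD : U2 s (Φ p) ∈ RapidDecay ⇑Φ := hinv2 s _ hpRD
    set a := U2 s (Φ p) with ha
    have e0 : ⟪Φ (0, m), H2 a⟫_ℂ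
        = (lam : ℂ) * ((Real.sqrt ((m : ℝ) + 1) : ℝ) : ℂ) * ⟪Φ (1, m + 1), a⟫_ℂ :=
      hH2a a haRD m
    have e1 : ⟪Φ (1, m + 1), H2 a⟫_ℂ
        = (lam : ℂ) * ((Real.sqrt ((m : ℝ) + 1) : ℝ) : ℂ) * ⟪Φ (0, m), a⟫_ℂ := by
      have h' := hH2b a haRD (m + 1)
      push_cast at h'
      simpa [Nat.add_sub_cancel] using h'
    rw [hVdef]
    simp only [inner_add_right, inner_smul_right, inner_smul_left, map_neg, Complex.conj_I,
      neg_neg]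
    rw [← inner_conj_symm (H2 a) (Φ (0, m)), ← inner_conj_symm (H2 a) (Φ (1, m + 1)), e0, e1]
    simp only [map_mul, Complex.conj_ofReal, inner_conj_symm]
    rw [hcast]
    ring
  have hGconst : ∀ s : ℝ, ⟪U2 s (Φ p), V s⟫_ℂ = 1 := by
    intro s
    have hconst := is_const_of_deriv_eq_zero (𝕜 := ℝ)
      (f := fun u => ⟪U2 u (Φ p), V u⟫_ℂ)
      (fun u => (hG u).differentiableAt) (fun u => (hG u).deriv) s 0
    have hU20' : U2 0 (Φ p) = Φ p := by rw [hU20]; rfl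
    calc ⟪U2 s (Φ p), V s⟫_ℂ = ⟪U2 0 (Φ p), V 0⟫_ℂ := hconst
      _ = ⟪Φ p, Φ p⟫_ℂ := by rw [hU20', hV0]
      _ = 1 := by rw [hite]; simp
  have hU2V : ∀ s : ℝ, U2 s (Φ p) = V s := by
    intro s
    have haa : ⟪U2 s (Φ p), U2 s (Φ p)⟫_ℂ = 1 := by
      rw [hU2unit, hite]; simp
    have hbb := hGconst s
    have hcc : ⟪V s, U2 s (Φ p)⟫_ℂ = 1 := by
      rw [← inner_conj_symm, hbb]; simp
    have hdd : ⟪V s, V s⟫_ℂ = 1 := by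
      rw [hVdef]
      simp only [inner_add_left, inner_add_right, inner_smul_left, inner_smul_right, hite]
      simpa [mul_comm] using cA_conj_sum Ω α₀ β₀ hcase s
    have h0 : ⟪U2 s (Φ p) - V s, U2 s (Φ p) - V s⟫_ℂ = 0 := by
      rw [inner_sub_left, inner_sub_right, inner_sub_right, haa, hbb, hcc, hdd]; ring
    exact sub_eq_zero.mp (inner_self_eq_zero.mp h0)
  -- Stage 2
  have hbound : ∀ x ∈ Submodule.span ℂ (Set.range ⇑Φ),
      ‖⟪U1 t x, U2 t (Φ p) - U1 t (Φ p)⟫_ℂ‖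
        ≤ (Real.sqrt 2 * lam * t * Real.sqrt ((m : ℝ) + 2)) * ‖x‖ := by
    intro x hx
    have hxRD : x ∈ RapidDecay ⇑Φ := span_subset_rapidDecay Φ x hx
    set F : ℝ → ℂ := fun s => ⟪U1 s x, V s⟫_ℂ with hF
    set E : ℝ → ℂ := fun s => Complex.I * (lam : ℂ) *
        (cA Ω α₀ β₀ s * Complex.exp (-(2 * Complex.I * s * ω))
            * ((Real.sqrt ((m : ℝ)) : ℝ) : ℂ) * ⟪U1 s x, Φ (1, m - 1)⟫_ℂ
          + cA Ω β₀ α₀ s * Complex.exp (2 * Complex.I * s * ω)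
            * ((Real.sqrt ((m : ℝ) + 2) : ℝ) : ℂ) * ⟪U1 s x, Φ (0, m + 2)⟫_ℂ) with hE
    have hFd : ∀ s : ℝ, HasDerivAt F (E s) s := by
      intro s
      have h := HasDerivAt.inner ℂ (hode1 x hxRD s) (hV s)
      convert h using 1
      · rfl
      have hbRD : U1 s x ∈ RapidDecay ⇑Φ := hinv1 s x hxRD
      set b := U1 s x with hb
      have hexp1 : (starRingEnd ℂ) (Complex.exp (2 * Complex.I * s * ω))
          = Complex.exp (-(2 * Complex.I * s * ω)) := by
        rw [← Complex.exp_conj]; congr 1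
        simp only [map_mul, map_ofNat, Complex.conj_I, Complex.conj_ofReal]; ring
      have hexp2 : (starRingEnd ℂ) (Complex.exp (-(2 * Complex.I * s * ω)))
          = Complex.exp (2 * Complex.I * s * ω) := by
        rw [← Complex.exp_conj]; congr 1
        simp only [map_neg, map_mul, map_ofNat, Complex.conj_I, Complex.conj_ofReal]; ring
      have f0 : ⟪H1 s b, Φ (0, m)⟫_ℂ
          = (lam : ℂ) * (((Real.sqrt ((m : ℝ) + 1) : ℝ) : ℂ) * ⟪b, Φ (1, m + 1)⟫_ℂ
              + Complex.exp (-(2 * Complex.I * s * ω)) * ((Real.sqrt ((m : ℝ)) : ℝ) : ℂ)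
                * ⟪b, Φ (1, m - 1)⟫_ℂ) := by
        rw [← inner_conj_symm (H1 s b) (Φ (0, m)), hH1a b hbRD s m]
        simp only [map_mul, map_add, Complex.conj_ofReal, inner_conj_symm, hexp1]
      have f1 : ⟪H1 s b, Φ (1, m + 1)⟫_ℂ
          = (lam : ℂ) * (((Real.sqrt ((m : ℝ) + 1) : ℝ) : ℂ) * ⟪b, Φ (0, m)⟫_ℂ
              + Complex.exp (2 * Complex.I * s * ω) * ((Real.sqrt ((m : ℝ) + 2) : ℝ) : ℂ)
                * ⟪b, Φ (0, m + 2)⟫_ℂ) := by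
        rw [← inner_conj_symm (H1 s b) (Φ (1, m + 1))]
        have h' := hH1b b hbRD s (m + 1)
        have hidx : m + 1 + 1 = m + 2 := by omega
        have hsq : ((m : ℝ) + 1 + 1) = (m : ℝ) + 2 := by ring
        push_cast at h'
        rw [hidx, hsq] at h'
        rw [h']
        simp only [map_mul, map_add, Complex.conj_ofReal, inner_conj_symm, hexp2,
          Nat.add_sub_cancel]
      rw [hE, hVdef]
      simp only [inner_add_right, inner_smul_right, inner_smul_left, map_neg, Complex.conj_I,
        neg_neg]
      rw [f0, f1, hcast]
      ring
    have hFbound : ∀ s ∈ Set.Icc (0 : ℝ) t,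
        ‖E s‖ ≤ Real.sqrt 2 * lam * Real.sqrt ((m : ℝ) + 2) * ‖x‖ := by
      intro s _
      have hiso1 := iso_of_unit (U1 s) (hU1unit s)
      have hb1 : ‖⟪U1 s x, Φ (1, m - 1)⟫_ℂ‖ ≤ ‖x‖ := by
        calc ‖⟪U1 s x, Φ (1, m - 1)⟫_ℂ‖ ≤ ‖U1 s x‖ * ‖Φ (1, m - 1)‖ :=
              norm_inner_le_norm _ _
          _ = ‖x‖ := by rw [hiso1, Φ.orthonormal.1, mul_one]
      have hb2 : ‖⟪U1 s x, Φ (0, m + 2)⟫_ℂ‖ ≤ ‖x‖ := by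
        calc ‖⟪U1 s x, Φ (0, m + 2)⟫_ℂ‖ ≤ ‖U1 s x‖ * ‖Φ (0, m + 2)‖ :=
              norm_inner_le_norm _ _
          _ = ‖x‖ := by rw [hiso1, Φ.orthonormal.1, mul_one]
      have he1 : ‖Complex.exp (-(2 * Complex.I * s * ω))‖ = 1 := by
        have : (-(2 * Complex.I * s * ω)) = ((-(2 * s * ω) : ℝ) : ℂ) * Complex.I := by
          push_cast; ring
        rw [this, Complex.norm_exp_ofReal_mul_I]
      have he2 : ‖Complex.exp (2 * Complex.I * s * ω)‖ = 1 := by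
        have : (2 * Complex.I * s * ω) = (((2 * s * ω) : ℝ) : ℂ) * Complex.I := by
          push_cast; ring
        rw [this, Complex.norm_exp_ofReal_mul_I]
      have hsm : Real.sqrt ((m : ℝ)) ≤ Real.sqrt ((m : ℝ) + 2) := by
        apply Real.sqrt_le_sqrt; linarith
      have hA : ‖cA Ω α₀ β₀ s * Complex.exp (-(2 * Complex.I * s * ω))
            * ((Real.sqrt ((m : ℝ)) : ℝ) : ℂ) * ⟪U1 s x, Φ (1, m - 1)⟫_ℂ‖
          ≤ ‖cA Ω α₀ β₀ s‖ * (Real.sqrt ((m : ℝ) + 2) * ‖x‖) := by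
        rw [norm_mul, norm_mul, norm_mul, he1, mul_one, Complex.norm_real, Real.norm_eq_abs,
          abs_of_nonneg (Real.sqrt_nonneg _), mul_assoc]
        gcongr
      have hB : ‖cA Ω β₀ α₀ s * Complex.exp (2 * Complex.I * s * ω)
            * ((Real.sqrt ((m : ℝ) + 2) : ℝ) : ℂ) * ⟪U1 s x, Φ (0, m + 2)⟫_ℂ‖
          ≤ ‖cA Ω β₀ α₀ s‖ * (Real.sqrt ((m : ℝ) + 2) * ‖x‖) := by
        rw [norm_mul, norm_mul, norm_mul, he2, mul_one, Complex.norm_real, Real.norm_eq_abs,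
          abs_of_nonneg (Real.sqrt_nonneg _), mul_assoc]
        gcongr
      have hsum := cA_sum_norm Ω α₀ β₀ hcase s
      calc ‖E s‖ = ‖Complex.I‖ * ‖(lam : ℂ)‖ * ‖_ + _‖ := by
            rw [hE]; simp only; rw [norm_mul, norm_mul]
        _ ≤ 1 * lam * (‖cA Ω α₀ β₀ s‖ * (Real.sqrt ((m : ℝ) + 2) * ‖x‖)
              + ‖cA Ω β₀ α₀ s‖ * (Real.sqrt ((m : ℝ) + 2) * ‖x‖)) := by
            rw [Complex.norm_I, Complex.norm_real, Real.norm_eq_abs, abs_of_nonneg hlam]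
            gcongr
            exact le_trans (norm_add_le _ _) (add_le_add hA hB)
        _ = lam * ((‖cA Ω α₀ β₀ s‖ + ‖cA Ω β₀ α₀ s‖) * (Real.sqrt ((m : ℝ) + 2) * ‖x‖)) := by
            ring
        _ ≤ lam * (Real.sqrt 2 * (Real.sqrt ((m : ℝ) + 2) * ‖x‖)) := by
            gcongr
        _ = Real.sqrt 2 * lam * Real.sqrt ((m : ℝ) + 2) * ‖x‖ := by ring
    have hmvt := Convex.norm_image_sub_le_of_norm_hasDerivWithin_le
      (f := F) (f' := E) (s := Set.Icc (0 : ℝ) t)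
      (fun u _ => (hFd u).hasDerivWithinAt) hFbound (convex_Icc 0 t)
      (Set.left_mem_Icc.mpr ht0) (Set.right_mem_Icc.mpr ht0)
    have hF0 : F 0 = ⟪x, Φ p⟫_ℂ := by
      rw [hF]; simp only
      rw [hU10, hV0]; rfl
    have heq : ⟪U1 t x, U2 t (Φ p) - U1 t (Φ p)⟫_ℂ = F t - F 0 := by
      rw [inner_sub_right, hU2V t, hU1unit, hF0]
    rw [heq]
    calc ‖F t - F 0‖ ≤ Real.sqrt 2 * lam * Real.sqrt ((m : ℝ) + 2) * ‖x‖ * ‖t - 0‖ := hmvt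
      _ = Real.sqrt 2 * lam * t * Real.sqrt ((m : ℝ) + 2) * ‖x‖ := by
          rw [sub_zero, Real.norm_eq_abs, abs_of_nonneg ht0]; ring
  have hK0 : 0 ≤ Real.sqrt 2 * lam * t * Real.sqrt ((m : ℝ) + 2) := by
    have := Real.sqrt_nonneg (2 : ℝ)
    have := Real.sqrt_nonneg ((m : ℝ) + 2)
    positivity
  exact norm_le_of_dense_bound Φ (U1 t) (hU1unit t) (hU1surj t) _ _ hK0 hbound


lemma final_num (lam ω t : ℝ) (hlam : 0 < lam) (hω : 0 < ω)
    (ht0 : 0 ≤ t) (ht1 : t ≤ π / ω) (a b : ℝ) (hab : a ≤ b) :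
    Real.sqrt 2 * lam * t * Real.sqrt a ≤ 5 * (lam / ω) * Real.sqrt b := by
  have h1 : Real.sqrt a ≤ Real.sqrt b := Real.sqrt_le_sqrt hab
  have h2 : Real.sqrt 2 ≤ 1.5 := by
    rw [show (1.5 : ℝ) = Real.sqrt (1.5 ^ 2) from (Real.sqrt_sq (by norm_num)).symm]
    exact Real.sqrt_le_sqrt (by norm_num)
  have hπ : π < 3.15 := Real.pi_lt_d2
  have s2 := Real.sqrt_nonneg 2
  have sa := Real.sqrt_nonneg a
  have sb := Real.sqrt_nonneg b
  have h25 : Real.sqrt 2 * π ≤ 5 := by nlinarith [Real.pi_pos]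
  have step1 : Real.sqrt 2 * lam * t * Real.sqrt a
      ≤ Real.sqrt 2 * lam * (π / ω) * Real.sqrt b := by
    have c1 : Real.sqrt 2 * lam * t ≤ Real.sqrt 2 * lam * (π / ω) := by
      apply mul_le_mul_of_nonneg_left ht1 (by positivity)
    apply mul_le_mul c1 h1 sa
    positivity
  have step2 : Real.sqrt 2 * lam * (π / ω) * Real.sqrt b
      ≤ 5 * (lam / ω) * Real.sqrt b := by
    apply mul_le_mul_of_nonneg_right _ sb
    have : Real.sqrt 2 * lam * (π / ω) = (Real.sqrt 2 * π) * (lam / ω) := by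
      field_simp
    rw [this]
    apply mul_le_mul_of_nonneg_right h25 (by positivity)
  exact le_trans step1 step2

end Aux

/-- Upper bound of the RWA error on Fock states in the resonant case `Δ = 0`:
for `Φ_{j,n} = e_j ⊗ φ_n` with `n ≥ 1` and `g = λ/ω > 0`,
`sup_{t∈[0,π/ω]} ‖(U₂(t) - U₁(t))Φ_{j,n}‖ ≤ 5g√(n+3)`.
Here `U₁, U₂` are the interaction-picture propagators of the quantum Rabi and
Jaynes–Cummings models at resonance, characterised as unitary solutions of
`i U_j'(t) = H_j(t) U_j(t)` with
`H₁(t) = λ(σ₊⊗a + σ₋⊗a† + e^{2itω}σ₊⊗a† + e^{-2itω}σ₋⊗a)`,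
`H₂ = λ(σ₊⊗a + σ₋⊗a†)`, specified by matrix elements in the basis `Φ`. -/
theorem rwa_fock_upper_bound {HH : Type*} [NormedAddCommGroup HH]
    [InnerProductSpace ℂ HH] [CompleteSpace HH]
    (Φ : HilbertBasis (Fin 2 × ℕ) ℂ HH)
    (lam ω : ℝ) (hlam : 0 < lam) (hω : 0 < ω)
    (H1 : ℝ → HH →ₗ[ℂ] HH) (H2 : HH →ₗ[ℂ] HH)
    (U1 U2 : ℝ → HH →L[ℂ] HH)
    (hH1a : ∀ Ψ ∈ RapidDecay ⇑Φ, ∀ s : ℝ, ∀ m : ℕ,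
      ⟪Φ (0, m), H1 s Ψ⟫_ℂ
        = (lam : ℂ) * ((Real.sqrt (m + 1) : ℂ) * ⟪Φ (1, m + 1), Ψ⟫_ℂ
            + Complex.exp (2 * Complex.I * s * ω) * (Real.sqrt m : ℂ)
                * ⟪Φ (1, m - 1), Ψ⟫_ℂ))
    (hH1b : ∀ Ψ ∈ RapidDecay ⇑Φ, ∀ s : ℝ, ∀ m : ℕ,
      ⟪Φ (1, m), H1 s Ψ⟫_ℂ
        = (lam : ℂ) * ((Real.sqrt m : ℂ) * ⟪Φ (0, m - 1), Ψ⟫_ℂ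
            + Complex.exp (-(2 * Complex.I * s * ω)) * (Real.sqrt (m + 1) : ℂ)
                * ⟪Φ (0, m + 1), Ψ⟫_ℂ))
    (hH2a : ∀ Ψ ∈ RapidDecay ⇑Φ, ∀ m : ℕ,
      ⟪Φ (0, m), H2 Ψ⟫_ℂ = (lam : ℂ) * (Real.sqrt (m + 1) : ℂ) * ⟪Φ (1, m + 1), Ψ⟫_ℂ)
    (hH2b : ∀ Ψ ∈ RapidDecay ⇑Φ, ∀ m : ℕ,
      ⟪Φ (1, m), H2 Ψ⟫_ℂ = (lam : ℂ) * (Real.sqrt m : ℂ) * ⟪Φ (0, m - 1), Ψ⟫_ℂ)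
    (hU10 : U1 0 = 1) (hU20 : U2 0 = 1)
    (hU1unit : ∀ t : ℝ, ∀ x y : HH, ⟪U1 t x, U1 t y⟫_ℂ = ⟪x, y⟫_ℂ)
    (hU2unit : ∀ t : ℝ, ∀ x y : HH, ⟪U2 t x, U2 t y⟫_ℂ = ⟪x, y⟫_ℂ)
    (hU1surj : ∀ t : ℝ, Function.Surjective (U1 t))
    (hU2surj : ∀ t : ℝ, Function.Surjective (U2 t))
    (hinv1 : ∀ t : ℝ, ∀ Ψ ∈ RapidDecay ⇑Φ, U1 t Ψ ∈ RapidDecay ⇑Φ)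
    (hinv2 : ∀ t : ℝ, ∀ Ψ ∈ RapidDecay ⇑Φ, U2 t Ψ ∈ RapidDecay ⇑Φ)
    (hode1 : ∀ Ψ ∈ RapidDecay ⇑Φ, ∀ t : ℝ,
      HasDerivAt (fun s => U1 s Ψ) ((-Complex.I) • H1 t (U1 t Ψ)) t)
    (hode2 : ∀ Ψ ∈ RapidDecay ⇑Φ, ∀ t : ℝ,
      HasDerivAt (fun s => U2 s Ψ) ((-Complex.I) • H2 (U2 t Ψ)) t)
    (j : Fin 2) (n : ℕ) (hn : 1 ≤ n) :
    ∀ t ∈ Set.Icc (0:ℝ) (π / ω),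
      ‖U2 t (Φ (j, n)) - U1 t (Φ (j, n))‖ ≤ 5 * (lam / ω) * Real.sqrt ((n : ℝ) + 3) := by
  intro t ht
  obtain ⟨ht0, ht1⟩ := ht
  fin_cases j
  · have hp : Φ ((0 : Fin 2), n) = (1 : ℂ) • Φ (0, n) + (0 : ℂ) • Φ (1, n + 1) := by simp
    have hb := key_bound Φ lam ω hlam.le H1 H2 U1 U2 hH1a hH1b hH2a hH2b hU10 hU20 hU1unit
      hU2unit hU1surj hinv1 hinv2 hode1 hode2 n 1 0 (Or.inl ⟨rfl, rfl⟩) ((0 : Fin 2), n) hp t ht0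
    refine le_trans hb (final_num lam ω t hlam hω ht0 ht1 _ _ (by norm_num))
  · have hn1 : n - 1 + 1 = n := Nat.succ_pred_eq_of_pos hn
    have hp : Φ ((1 : Fin 2), n) = (0 : ℂ) • Φ (0, n - 1) + (1 : ℂ) • Φ (1, n - 1 + 1) := by
      rw [hn1]; simp
    have hb := key_bound Φ lam ω hlam.le H1 H2 U1 U2 hH1a hH1b hH2a hH2b hU10 hU20 hU1unit
      hU2unit hU1surj hinv1 hinv2 hode1 hode2 (n - 1) 0 1 (Or.inr ⟨rfl, rfl⟩)
      ((1 : Fin 2), n) hp t ht0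
    refine le_trans hb (final_num lam ω t hlam hω ht0 ht1 _ _ ?_)
    have : ((n - 1 : ℕ) : ℝ) ≤ (n : ℝ) := by
      exact_mod_cast Nat.sub_le n 1
    linarith
end
end
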